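/- arXiv:math/0506223 — 4 statements merged into one kernel-verified Lean document; each statement's English description precedes it below -/
import Mathlib

section
/- Let P be a finite poset on [n]. A subset V ⊆ [n] can be partitioned into r chains of P if and only if V contains no antichain of cardinality r+1. Consequently, the r-th secant of the Stanley–Reisner ideal J(P) (generated by the 2-element antichains of P) is generated by the monomials ∏_{i∈A} x_i where A ranges over antichains of cardinality r+1 in P. -/
section Dilworth

variable {α : Type*} [DecidableEq α]

/-- A nonempty finite chain has a greatest element. -/
lemma chain_finset_exists_max (P : PartialOrder α) (s : Finset α)
    (hc : IsChain P.le (↑s : Set α)) (hs : s.Nonempty) :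
    ∃ m ∈ s, ∀ x ∈ s, P.le x m := by
  letI := P
  obtain ⟨m, hm, hmax⟩ := s.exists_maximal hs
  refine ⟨m, hm, fun x hx => ?_⟩
  rcases eq_or_ne x m with rfl | hne
  · exact le_refl x
  · rcases hc (by exact_mod_cast hx) (by exact_mod_cast hm) hne with h | h
    · exact h
    · exact absurd (lt_of_le_of_ne h (Ne.symm hne)) (fun hlt => (hlt.not_ge (hmax hx hlt.le)))

/-- Dilworth's theorem: if every antichain in `V` has at most `r` elements then
`V` can be partitioned into `r` chains. -/
lemma dilworth_aux (P : PartialOrder α) :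
    ∀ (N : ℕ) (V : Finset α), V.card ≤ N →
    ∀ r : ℕ, (∀ A : Finset α, A ⊆ V → IsAntichain P.le (↑A : Set α) → A.card ≤ r) →
    ∃ f : Fin r → Finset α, (∀ t, IsChain P.le (↑(f t) : Set α)) ∧
      (∀ s t, s ≠ t → Disjoint (f s) (f t)) ∧ (∀ x, x ∈ V ↔ ∃ t, x ∈ f t) := by
  letI := P
  classical
  intro N
  induction N with
  | zero =>
    intro V hV r _
    have : V = ∅ := Finset.card_eq_zero.mp (Nat.le_zero.mp hV)
    subst this
    exact ⟨fun _ => ∅, fun t => by simp [IsChain], fun s t _ => by simp, fun x => by simp⟩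
  | succ N ih =>
    intro V hV r H
    rcases V.eq_empty_or_nonempty with rfl | hne
    · exact ⟨fun _ => ∅, fun t => by simp [IsChain], fun s t _ => by simp, fun x => by simp⟩
    rcases r with _ | r'
    · exfalso
      obtain ⟨a, ha⟩ := hne
      have hsing : IsAntichain P.le (↑({a} : Finset α) : Set α) := by
        rintro x hx y hy hxy
        simp only [Finset.coe_singleton, Set.mem_singleton_iff] at hx hy
        subst hx; subst hy; exact absurd rfl hxy
      have h1 : ({a} : Finset α).card ≤ 0 := H {a} (by simpa using ha) hsing
      simp at h1
    obtain ⟨a, haV, hamax⟩ := V.exists_maximal hne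
    set V' := V.erase a with hV'def
    have haV' : a ∉ V' := Finset.notMem_erase a V
    have hV'V : V' ⊆ V := Finset.erase_subset a V
    have hV'card : V'.card ≤ N := by
      have h1 : V'.card = V.card - 1 := by rw [hV'def]; exact Finset.card_erase_of_mem haV
      have h2 : 1 ≤ V.card := Finset.card_pos.mpr hne
      omega
    by_cases hB : ∃ A : Finset α, A ⊆ V' ∧ IsAntichain P.le (↑A : Set α) ∧ A.card = r' + 1
    · -- case B : there is an antichain of full size r'+1 in V'
      have H' : ∀ A : Finset α, A ⊆ V' → IsAntichain P.le (↑A : Set α) → A.card ≤ r' + 1 :=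
        fun A hA hanti => H A (hA.trans hV'V) hanti
      obtain ⟨C, hCchain, hCdisj, hCmem⟩ := ih V' hV'card (r' + 1) H'
      -- every full antichain meets every chain
      have meets : ∀ A : Finset α, A ⊆ V' → IsAntichain P.le (↑A : Set α) → A.card = r' + 1 →
          ∀ t, ∃ b, b ∈ A ∧ b ∈ C t := by
        intro A hAV hanti hcard t
        by_contra hno
        push_neg at hno
        have hsub : A ⊆ (Finset.univ.erase t).biUnion (fun s => A ∩ C s) := by
          intro x hx
          obtain ⟨s, hs⟩ := (hCmem x).mp (hAV hx)
          have hst : s ≠ t := by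
            rintro rfl; exact hno x hx hs
          simp only [Finset.mem_biUnion, Finset.mem_erase, Finset.mem_inter]
          exact ⟨s, ⟨hst, Finset.mem_univ s⟩, hx, hs⟩
        have hcard2 : A.card ≤ ((Finset.univ.erase t).biUnion (fun s => A ∩ C s)).card :=
          Finset.card_le_card hsub
        have hcard3 : ((Finset.univ.erase t).biUnion (fun s => A ∩ C s)).card ≤
            ∑ s ∈ Finset.univ.erase t, (A ∩ C s).card := Finset.card_biUnion_le
        have hone : ∀ s : Fin (r' + 1), (A ∩ C s).card ≤ 1 := by
          intro s
          rw [Finset.card_le_one]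
          intro x hx y hy
          simp only [Finset.mem_inter] at hx hy
          by_contra hxy
          rcases hCchain s (by exact_mod_cast hx.2) (by exact_mod_cast hy.2) hxy with h | h
          · exact hanti (by exact_mod_cast hx.1) (by exact_mod_cast hy.1) hxy h
          · exact hanti (by exact_mod_cast hy.1) (by exact_mod_cast hx.1) (Ne.symm hxy) h
        have hcard4 : ∑ s ∈ Finset.univ.erase t, (A ∩ C s).card ≤ (Finset.univ.erase t).card :=
          Finset.sum_le_card_nsmul _ _ 1 (fun s _ => hone s) |>.trans (by simp)
        have : (Finset.univ.erase t).card = r' := by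
          rw [Finset.card_erase_of_mem (Finset.mem_univ t)]
          simp
        omega
      -- the set of elements of C t appearing in some full antichain
      have hSne : ∀ t, ∃ m, (m ∈ C t ∧
          (∃ A, A ⊆ V' ∧ IsAntichain P.le (↑A : Set α) ∧ A.card = r' + 1 ∧ m ∈ A)) ∧
          ∀ x ∈ C t, (∃ A, A ⊆ V' ∧ IsAntichain P.le (↑A : Set α) ∧ A.card = r' + 1 ∧ x ∈ A) →
            P.le x m := by
        intro t
        set S : Finset α := (C t).filter
          (fun x => ∃ A, A ⊆ V' ∧ IsAntichain P.le (↑A : Set α) ∧ A.card = r' + 1 ∧ x ∈ A) with hSdef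
        have hSsub : S ⊆ C t := Finset.filter_subset _ _
        have hSchain : IsChain P.le (↑S : Set α) :=
          (hCchain t).mono (by exact_mod_cast hSsub)
        have hSnonempty : S.Nonempty := by
          obtain ⟨A₀, hA₀V, hA₀anti, hA₀card⟩ := hB
          obtain ⟨b, hbA, hbC⟩ := meets A₀ hA₀V hA₀anti hA₀card t
          exact ⟨b, Finset.mem_filter.mpr ⟨hbC, A₀, hA₀V, hA₀anti, hA₀card, hbA⟩⟩
        obtain ⟨m, hmS, hmax⟩ := chain_finset_exists_max P S hSchain hSnonempty
        have hm := Finset.mem_filter.mp hmS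
        exact ⟨m, ⟨hm.1, hm.2⟩, fun x hx hex => hmax x (Finset.mem_filter.mpr ⟨hx, hex⟩)⟩
      choose aT haT haTmax using hSne
      have haTC : ∀ t, aT t ∈ C t := fun t => (haT t).1
      have haTV' : ∀ t, aT t ∈ V' := by
        intro t
        obtain ⟨A, hAV, _, _, hmem⟩ := (haT t).2
        exact hAV hmem
      have hanti : ∀ s t, s ≠ t → ¬ P.le (aT s) (aT t) := by
        intro s t hst hle
        obtain ⟨A, hAV, hAanti, hAcard, htA⟩ := (haT t).2
        obtain ⟨b, hbA, hbC⟩ := meets A hAV hAanti hAcard s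
        have hble : P.le b (aT s) := haTmax s b hbC ⟨A, hAV, hAanti, hAcard, hbA⟩
        have hbne : b ≠ aT t := by
          rintro rfl
          exact (Finset.disjoint_left.mp (hCdisj s t hst)) hbC (haTC t)
        exact hAanti (by exact_mod_cast hbA) (by exact_mod_cast htA) hbne (le_trans hble hle)
      -- a is above some aT t₀
      have hex : ∃ t₀, P.le (aT t₀) a := by
        by_contra h
        push_neg at h
        have hinj : Function.Injective aT := by
          intro s t hst
          by_contra hne
          exact (Finset.disjoint_left.mp (hCdisj s t hne)) (hst ▸ haTC s) (haTC t)
        set Ach := Finset.image aT Finset.univ with hAchdef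
        have hAchcard : Ach.card = r' + 1 := by
          rw [Finset.card_image_of_injective _ hinj, Finset.card_univ, Fintype.card_fin]
        have haAch : a ∉ Ach := by
          simp only [hAchdef, Finset.mem_image]
          rintro ⟨t, -, rfl⟩
          exact haV' (haTV' t)
        have hbig : IsAntichain P.le (↑(insert a Ach) : Set α) := by
          intro x hx y hy hxy
          simp only [Finset.coe_insert, Set.mem_insert_iff, Finset.mem_coe, hAchdef,
            Finset.mem_image, Finset.mem_univ, true_and] at hx hy
          rcases hx with rfl | ⟨s, rfl⟩
          · rcases hy with rfl | ⟨t, rfl⟩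
            · exact absurd rfl hxy
            · intro hle
              have : x ≠ aT t := hxy
              have : P.lt x (aT t) := lt_of_le_of_ne hle this
              exact this.not_ge (hamax (hV'V (haTV' t)) this.le)
          · rcases hy with rfl | ⟨t, rfl⟩
            · exact h s
            · have : s ≠ t := by rintro rfl; exact hxy rfl
              exact hanti s t this
        have : (insert a Ach).card ≤ r' + 1 := by
          apply H _ _ hbig
          intro x hx
          rcases Finset.mem_insert.mp hx with rfl | hx
          · exact haV
          · simp only [hAchdef, Finset.mem_image] at hx
            obtain ⟨t, -, rfl⟩ := hx
            exact hV'V (haTV' t)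
        rw [Finset.card_insert_of_notMem haAch, hAchcard] at this
        omega
      obtain ⟨t₀, ht₀⟩ := hex
      set Kc := (C t₀).filter (fun x => P.le x (aT t₀)) with hKcdef
      set Kf := insert a Kc with hKfdef
      have hKcle : ∀ x ∈ Kc, P.le x a := by
        intro x hx
        exact le_trans (Finset.mem_filter.mp hx).2 ht₀
      have hKchain : IsChain P.le (↑Kf : Set α) := by
        intro x hx y hy hxy
        simp only [hKfdef, Finset.coe_insert, Set.mem_insert_iff, Finset.mem_coe] at hx hy
        rcases hx with rfl | hx
        · rcases hy with rfl | hy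
          · exact absurd rfl hxy
          · exact Or.inr (hKcle y hy)
        · rcases hy with rfl | hy
          · exact Or.inl (hKcle x hx)
          · exact hCchain t₀ (by exact_mod_cast Finset.mem_of_mem_filter x hx)
              (by exact_mod_cast Finset.mem_of_mem_filter y hy) hxy
      have hKV : Kf ⊆ V := by
        intro x hx
        rcases Finset.mem_insert.mp hx with rfl | hx
        · exact haV
        · exact hV'V ((hCmem x).mpr ⟨t₀, Finset.mem_of_mem_filter x hx⟩)
      set W := V \ Kf with hWdef
      have haKf : a ∈ Kf := Finset.mem_insert_self a Kc
      have hWV' : W ⊆ V' := by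
        intro x hx
        obtain ⟨hxV, hxK⟩ := Finset.mem_sdiff.mp hx
        refine Finset.mem_erase.mpr ⟨?_, hxV⟩
        rintro rfl; exact hxK haKf
      have hWcard : W.card ≤ N := le_trans (Finset.card_le_card hWV') hV'card
      have HW : ∀ A : Finset α, A ⊆ W → IsAntichain P.le (↑A : Set α) → A.card ≤ r' := by
        intro A hAW hAanti
        have h1 : A.card ≤ r' + 1 := H A (hAW.trans (Finset.sdiff_subset)) hAanti
        rcases Nat.lt_or_ge A.card (r' + 1) with h | h
        · omega
        have hcard : A.card = r' + 1 := le_antisymm h1 h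
        exfalso
        obtain ⟨b, hbA, hbC⟩ := meets A (hAW.trans hWV') hAanti hcard t₀
        have hble : P.le b (aT t₀) := haTmax t₀ b hbC ⟨A, hAW.trans hWV', hAanti, hcard, hbA⟩
        have hbK : b ∈ Kf := Finset.mem_insert_of_mem (Finset.mem_filter.mpr ⟨hbC, hble⟩)
        exact (Finset.mem_sdiff.mp (hAW hbA)).2 hbK
      obtain ⟨g, hgchain, hgdisj, hgmem⟩ := ih W hWcard r' HW
      have hgW : ∀ i, g i ⊆ W := fun i x hx => (hgmem x).mpr ⟨i, hx⟩
      refine ⟨Fin.cons Kf g, ?_, ?_, ?_⟩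
      · intro t
        rcases Fin.eq_zero_or_eq_succ t with rfl | ⟨j, rfl⟩
        · simpa using hKchain
        · simpa using hgchain j
      · intro s t hst
        rcases Fin.eq_zero_or_eq_succ s with rfl | ⟨i, rfl⟩ <;>
          rcases Fin.eq_zero_or_eq_succ t with rfl | ⟨j, rfl⟩
        · exact absurd rfl hst
        · simp only [Fin.cons_zero, Fin.cons_succ]
          exact Finset.disjoint_left.mpr (fun x hx hxg =>
            (Finset.mem_sdiff.mp (hgW j hxg)).2 hx)
        · simp only [Fin.cons_zero, Fin.cons_succ]
          exact Finset.disjoint_left.mpr (fun x hx => (Finset.mem_sdiff.mp (hgW i hx)).2)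
        · simp only [Fin.cons_succ]
          exact hgdisj i j (fun h => hst (by rw [h]))
      · intro x
        constructor
        · intro hx
          by_cases hxK : x ∈ Kf
          · exact ⟨0, by simpa using hxK⟩
          · obtain ⟨i, hi⟩ := (hgmem x).mp (Finset.mem_sdiff.mpr ⟨hx, hxK⟩)
            exact ⟨i.succ, by simpa using hi⟩
        · rintro ⟨t, ht⟩
          rcases Fin.eq_zero_or_eq_succ t with rfl | ⟨j, rfl⟩
          · exact hKV (by simpa using ht)
          · exact Finset.sdiff_subset (hgW j (by simpa using ht))
    · -- case A : no antichain of size r'+1 in V'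
      have H' : ∀ A : Finset α, A ⊆ V' → IsAntichain P.le (↑A : Set α) → A.card ≤ r' := by
        intro A hA hanti
        have h1 : A.card ≤ r' + 1 := H A (hA.trans hV'V) hanti
        rcases Nat.lt_or_ge A.card (r' + 1) with h | h
        · omega
        · exact absurd ⟨A, hA, hanti, le_antisymm h1 h⟩ hB
      obtain ⟨g, hgchain, hgdisj, hgmem⟩ := ih V' hV'card r' H'
      have hgV' : ∀ i, g i ⊆ V' := fun i x hx => (hgmem x).mpr ⟨i, hx⟩
      refine ⟨Fin.cons {a} g, ?_, ?_, ?_⟩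
      · intro t
        rcases Fin.eq_zero_or_eq_succ t with rfl | ⟨j, rfl⟩
        · simp only [Fin.cons_zero, Finset.coe_singleton]
          exact Set.Subsingleton.isChain (Set.subsingleton_singleton)
        · simpa using hgchain j
      · intro s t hst
        rcases Fin.eq_zero_or_eq_succ s with rfl | ⟨i, rfl⟩ <;>
          rcases Fin.eq_zero_or_eq_succ t with rfl | ⟨j, rfl⟩
        · exact absurd rfl hst
        · simp only [Fin.cons_zero, Fin.cons_succ]
          refine Finset.disjoint_left.mpr (fun x hx hxg => ?_)
          rw [Finset.mem_singleton] at hx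
          subst hx
          exact haV' (hgV' j hxg)
        · simp only [Fin.cons_zero, Fin.cons_succ]
          refine Finset.disjoint_left.mpr (fun x hx hxa => ?_)
          rw [Finset.mem_singleton] at hxa
          subst hxa
          exact haV' (hgV' i hx)
        · simp only [Fin.cons_succ]
          exact hgdisj i j (fun h => hst (by rw [h]))
      · intro x
        constructor
        · intro hx
          by_cases hxa : x = a
          · exact ⟨0, by simp [hxa]⟩
          · obtain ⟨i, hi⟩ := (hgmem x).mp (Finset.mem_erase.mpr ⟨hxa, hx⟩)
            exact ⟨i.succ, by simpa using hi⟩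
        · rintro ⟨t, ht⟩
          rcases Fin.eq_zero_or_eq_succ t with rfl | ⟨j, rfl⟩
          · have h := ht
            rw [Fin.cons_zero, Finset.mem_singleton] at h
            subst h; exact haV
          · exact hV'V (hgV' j (by simpa using ht))

end Dilworth

section Part1

lemma dilworth_sets {n : ℕ} (P : PartialOrder (Fin n)) (r : ℕ) (V : Set (Fin n)) :
    (∃ f : Fin r → Set (Fin n), (∀ t, IsChain P.le (f t)) ∧ V = ⋃ t, f t ∧
        ∀ s t : Fin r, s ≠ t → Disjoint (f s) (f t)) ↔
      (∀ A : Finset (Fin n), ↑A ⊆ V → IsAntichain P.le (↑A : Set (Fin n)) →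
        A.card ≤ r) := by
  classical
  constructor
  · rintro ⟨f, hchain, rfl, hdisj⟩ A hAV hanti
    have hch : ∀ a : Fin n, a ∈ A → ∃ t, a ∈ f t := by
      intro a ha
      have := hAV (by exact_mod_cast ha)
      simpa using this
    choose T hT using hch
    rcases A.eq_empty_or_nonempty with rfl | ⟨a₀, ha₀⟩
    · simp
    haveI : Nonempty (Fin r) := ⟨T a₀ ha₀⟩
    have : A.card ≤ (Finset.univ : Finset (Fin r)).card := by
      apply Finset.card_le_card_of_injOn
        (fun a => if h : a ∈ A then T a h else Classical.arbitrary _)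
        (fun a _ => Finset.mem_univ _)
      intro a ha b hb hab
      simp only [Finset.mem_coe] at ha hb
      dsimp only at hab
      rw [dif_pos ha, dif_pos hb] at hab
      by_contra hne
      have haf : a ∈ f (T a ha) := hT a ha
      have hbf : b ∈ f (T a ha) := hab ▸ hT b hb
      rcases hchain (T a ha) haf hbf hne with h | h
      · exact hanti (by exact_mod_cast ha) (by exact_mod_cast hb) hne h
      · exact hanti (by exact_mod_cast hb) (by exact_mod_cast ha) (Ne.symm hne) h
    simpa using this
  · intro H
    have hVfin : V.Finite := Set.toFinite V
    set Vf := hVfin.toFinset with hVfdef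
    have HVf : ∀ A : Finset (Fin n), A ⊆ Vf → IsAntichain P.le (↑A : Set (Fin n)) →
        A.card ≤ r := by
      intro A hA hanti
      refine H A ?_ hanti
      intro x hx
      exact hVfin.mem_toFinset.mp (hA (by exact_mod_cast hx))
    obtain ⟨f, hchain, hdisj, hmem⟩ := dilworth_aux P Vf.card Vf le_rfl r HVf
    refine ⟨fun t => ↑(f t), fun t => hchain t, ?_, ?_⟩
    · ext x
      simp only [Set.mem_iUnion, Finset.mem_coe]
      rw [← hVfin.mem_toFinset]
      exact hmem x
    · intro s t hst
      exact Finset.disjoint_coe.mpr (hdisj s t hst)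

end Part1

open MvPolynomial

section AntiIdeal

variable {K : Type*} [Field K] {n : ℕ}

/-- The set of squarefree monomials indexed by antichains of cardinality `m`. -/
def antiSet (P : PartialOrder (Fin n)) (K : Type*) [Field K] (m : ℕ) :
    Set (MvPolynomial (Fin n) K) :=
  {p | ∃ A : Finset (Fin n), IsAntichain P.le (↑A : Set (Fin n)) ∧ A.card = m ∧
    p = ∏ i ∈ A, X i}

lemma dA_apply (A : Finset (Fin n)) (j : Fin n) :
    (∑ i ∈ A, Finsupp.single i (1 : ℕ)) j = if j ∈ A then 1 else 0 := by
  classical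
  rw [Finset.sum_apply']
  simp [Finsupp.single_apply, Finset.sum_ite_eq]

lemma monomial_dA (A : Finset (Fin n)) :
    (monomial (∑ i ∈ A, Finsupp.single i (1 : ℕ)) (1 : K)) = ∏ i ∈ A, X i := by
  classical
  induction A using Finset.induction with
  | empty => simp
  | @insert a s h ih =>
    rw [Finset.sum_insert h, Finset.prod_insert h, ← ih,
      show (X a : MvPolynomial (Fin n) K) = monomial (Finsupp.single a 1) 1 from by
        rw [← X_pow_eq_monomial, pow_one],
      monomial_mul, one_mul]

lemma mem_antiIdeal (P : PartialOrder (Fin n)) (m : ℕ) (p : MvPolynomial (Fin n) K) :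
    p ∈ Ideal.span (antiSet P K m) ↔
      ∀ u ∈ p.support, ∃ A : Finset (Fin n), IsAntichain P.le (↑A : Set (Fin n)) ∧
        A.card = m ∧ ∀ i ∈ A, u i ≠ 0 := by
  classical
  have hset : antiSet P K m = (fun s => monomial s (1 : K)) ''
      {s : Fin n →₀ ℕ | ∃ A : Finset (Fin n), IsAntichain P.le (↑A : Set (Fin n)) ∧
        A.card = m ∧ s = ∑ i ∈ A, Finsupp.single i 1} := by
    ext q
    constructor
    · rintro ⟨A, h1, h2, rfl⟩
      exact ⟨∑ i ∈ A, Finsupp.single i 1, ⟨A, h1, h2, rfl⟩, monomial_dA A⟩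
    · rintro ⟨s, ⟨A, h1, h2, rfl⟩, rfl⟩
      exact ⟨A, h1, h2, by simpa using monomial_dA (K := K) A⟩
  rw [hset, mem_ideal_span_monomial_image]
  refine forall₂_congr (fun u hu => ?_)
  constructor
  · rintro ⟨si, ⟨A, h1, h2, rfl⟩, hle⟩
    refine ⟨A, h1, h2, fun i hi => ?_⟩
    have := hle i
    rw [dA_apply, if_pos hi] at this
    omega
  · rintro ⟨A, h1, h2, hne⟩
    refine ⟨∑ i ∈ A, Finsupp.single i 1, ⟨A, h1, h2, rfl⟩, ?_⟩
    intro j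
    rw [dA_apply]
    split_ifs with hj
    · exact Nat.one_le_iff_ne_zero.mpr (hne j hj)
    · exact Nat.zero_le _

end AntiIdeal

open MvPolynomial

section Coeff

variable {K : Type*} [Field K] {n : ℕ}

lemma coeff_aeval_ite (s : Finset (Fin n)) (f : MvPolynomial (Fin n) K) (u : Fin n →₀ ℕ)
    (hu : ∀ i ∈ u.support, i ∈ s) :
    coeff u (aeval (fun i => if i ∈ s then (X i : MvPolynomial (Fin n) K) else 0) f)
      = coeff u f := by
  classical
  conv_lhs => rw [f.as_sum]
  rw [map_sum, coeff_sum]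
  rw [Finset.sum_eq_single u]
  · rw [aeval_monomial]
    have hprod : (u.prod fun i k =>
        (if i ∈ s then (X i : MvPolynomial (Fin n) K) else 0) ^ k) = monomial u 1 := by
      rw [← prod_X_pow_eq_monomial, Finsupp.prod]
      exact Finset.prod_congr rfl (fun i hi => by rw [if_pos (hu i hi)])
    rw [hprod, algebraMap_eq, C_mul_monomial, mul_one, coeff_monomial, if_pos rfl]
  · intro v hv hvu
    rw [aeval_monomial]
    by_cases hvs : ∀ i ∈ v.support, i ∈ s
    · have hprod : (v.prod fun i k =>
          (if i ∈ s then (X i : MvPolynomial (Fin n) K) else 0) ^ k) = monomial v 1 := by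
        rw [← prod_X_pow_eq_monomial, Finsupp.prod]
        exact Finset.prod_congr rfl (fun i hi => by rw [if_pos (hvs i hi)])
      rw [hprod, algebraMap_eq, C_mul_monomial, mul_one, coeff_monomial, if_neg hvu]
    · push_neg at hvs
      obtain ⟨i, hiv, his⟩ := hvs
      have hprod : (v.prod fun i k =>
          (if i ∈ s then (X i : MvPolynomial (Fin n) K) else 0) ^ k) = 0 := by
        rw [Finsupp.prod]
        refine Finset.prod_eq_zero hiv ?_
        rw [if_neg his]
        exact zero_pow (Finsupp.mem_support_iff.mp hiv)
      rw [hprod, mul_zero, coeff_zero]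
  · intro h
    rw [notMem_support_iff.mp h, monomial_zero, map_zero, coeff_zero]

end Coeff

open MvPolynomial

noncomputable def joinIdeal {K : Type*} [Field K] {n : ℕ}
    (I J : Ideal (MvPolynomial (Fin n) K)) : Ideal (MvPolynomial (Fin n) K) :=
  Ideal.comap (rename (Sum.inl : Fin n → Fin n ⊕ (Fin n ⊕ Fin n)))
    (Ideal.map (rename (fun i : Fin n => (Sum.inr (Sum.inl i) : Fin n ⊕ (Fin n ⊕ Fin n)))) I ⊔
     Ideal.map (rename (fun i : Fin n => (Sum.inr (Sum.inr i) : Fin n ⊕ (Fin n ⊕ Fin n)))) J ⊔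
     Ideal.span {p : MvPolynomial (Fin n ⊕ (Fin n ⊕ Fin n)) K | ∃ i : Fin n,
       p = X (Sum.inr (Sum.inl i)) + X (Sum.inr (Sum.inr i)) - X (Sum.inl i)})

section JoinStep

variable {K : Type*} [Field K] {n : ℕ}

lemma joinStep (P : PartialOrder (Fin n)) (m : ℕ) :
    joinIdeal (Ideal.span (antiSet P K (m + 1))) (Ideal.span (antiSet P K 2))
      = Ideal.span (antiSet P K (m + 2)) := by
  classical
  set ry : Fin n → Fin n ⊕ (Fin n ⊕ Fin n) := fun i => Sum.inr (Sum.inl i) with hry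
  set rz : Fin n → Fin n ⊕ (Fin n ⊕ Fin n) := fun i => Sum.inr (Sum.inr i) with hrz
  set M : Ideal (MvPolynomial (Fin n ⊕ (Fin n ⊕ Fin n)) K) :=
    Ideal.map (rename ry) (Ideal.span (antiSet P K (m + 1))) ⊔
    Ideal.map (rename rz) (Ideal.span (antiSet P K 2)) ⊔
    Ideal.span {p : MvPolynomial (Fin n ⊕ (Fin n ⊕ Fin n)) K | ∃ i : Fin n,
      p = X (Sum.inr (Sum.inl i)) + X (Sum.inr (Sum.inr i)) - X (Sum.inl i)} with hM
  have hMI : Ideal.map (rename ry) (Ideal.span (antiSet P K (m + 1))) ≤ M :=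
    le_trans le_sup_left le_sup_left
  have hMJ : Ideal.map (rename rz) (Ideal.span (antiSet P K 2)) ≤ M :=
    le_trans le_sup_right le_sup_left
  have hMR : Ideal.span {p : MvPolynomial (Fin n ⊕ (Fin n ⊕ Fin n)) K | ∃ i : Fin n,
      p = X (Sum.inr (Sum.inl i)) + X (Sum.inr (Sum.inr i)) - X (Sum.inl i)} ≤ M := le_sup_right
  have hjoin : joinIdeal (Ideal.span (antiSet P K (m + 1))) (Ideal.span (antiSet P K 2))
      = Ideal.comap (rename (Sum.inl : Fin n → Fin n ⊕ (Fin n ⊕ Fin n))) M := rfl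
  apply le_antisymm
  · -- hard inclusion
    intro f hf
    rw [hjoin, Ideal.mem_comap] at hf
    rw [mem_antiIdeal]
    intro u hu
    by_contra hno
    push_neg at hno
    -- every antichain in the support of u has at most m+1 elements
    have Hsup : ∀ A : Finset (Fin n), A ⊆ u.support →
        IsAntichain P.le (↑A : Set (Fin n)) → A.card ≤ m + 1 := by
      intro A hA hanti
      by_contra h
      push_neg at h
      obtain ⟨B, hBA, hBcard⟩ := Finset.exists_subset_card_eq h
      obtain ⟨i, hiB, hi0⟩ := hno B (hanti.subset (Finset.coe_subset.mpr hBA)) hBcard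
      exact Finsupp.mem_support_iff.mp (hA (hBA hiB)) hi0
    obtain ⟨D, hDchain, hDdisj, hDmem⟩ :=
      dilworth_aux P u.support.card u.support le_rfl (m + 1) Hsup
    have hDsub : ∀ t, D t ⊆ u.support := fun t x hx => (hDmem x).mpr ⟨t, hx⟩
    set Y : Finset (Fin n) := (Finset.univ.erase (Fin.last m)).biUnion D with hY
    set Z : Finset (Fin n) := D (Fin.last m) with hZ
    have hYZ : ∀ i, i ∈ Y → i ∉ Z := by
      intro i hiY hiZ
      rw [hY, Finset.mem_biUnion] at hiY
      obtain ⟨t, ht, hit⟩ := hiY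
      exact (Finset.disjoint_left.mp (hDdisj t (Fin.last m)
        (Finset.mem_erase.mp ht).1) hit) hiZ
    have hsplit : ∀ i, i ∈ u.support → (i ∈ Y ∨ i ∈ Z) := by
      intro i hi
      obtain ⟨t, ht⟩ := (hDmem i).mp hi
      by_cases htl : t = Fin.last m
      · exact Or.inr (by rw [hZ, ← htl]; exact ht)
      · exact Or.inl (Finset.mem_biUnion.mpr ⟨t, Finset.mem_erase.mpr ⟨htl, Finset.mem_univ t⟩, ht⟩)
    have hYsub : ∀ i, i ∈ Y → i ∈ u.support := by
      intro i hi
      rw [hY, Finset.mem_biUnion] at hi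
      obtain ⟨t, -, hit⟩ := hi
      exact hDsub t hit
    have hZsub : ∀ i, i ∈ Z → i ∈ u.support := fun i hi => hDsub _ hi
    set e : (Fin n ⊕ (Fin n ⊕ Fin n)) → MvPolynomial (Fin n) K := fun j =>
      match j with
      | Sum.inl i => if i ∈ u.support then X i else 0
      | Sum.inr (Sum.inl i) => if i ∈ Y then X i else 0
      | Sum.inr (Sum.inr i) => if i ∈ Z then X i else 0
      with he
    have hker : M ≤ RingHom.ker (aeval e : MvPolynomial (Fin n ⊕ (Fin n ⊕ Fin n)) K →ₐ[K]
        MvPolynomial (Fin n) K) := by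
      rw [hM]
      refine sup_le (sup_le ?_ ?_) ?_
      · rw [Ideal.map_le_iff_le_comap, Ideal.span_le]
        rintro p ⟨A, hanti, hcard, rfl⟩
        simp only [SetLike.mem_coe, Ideal.mem_comap, RingHom.mem_ker]
        rw [map_prod, map_prod]
        -- some element of A is not in Y
        have : ∃ i ∈ A, i ∉ Y := by
          by_contra hAY
          push_neg at hAY
          -- A would be covered by the m chains D t, t ≠ last
          have hmap : ∀ a ∈ A, ∃ t ∈ Finset.univ.erase (Fin.last m), a ∈ D t := by
            intro a ha
            have := hAY a ha
            rw [hY, Finset.mem_biUnion] at this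
            exact this
          choose T hT1 hT2 using hmap
          set F : Fin n → Fin (m + 1) := fun a => if ha : a ∈ A then T a ha else Fin.last m
            with hF
          have hF1 : ∀ a ∈ A, F a ∈ Finset.univ.erase (Fin.last m) := by
            intro a ha
            rw [hF]
            simp only [dif_pos ha]
            exact hT1 a ha
          have hcardlt : (Finset.univ.erase (Fin.last m)).card < A.card := by
            rw [Finset.card_erase_of_mem (Finset.mem_univ _), Finset.card_univ,
              Fintype.card_fin, hcard]
            omega
          obtain ⟨a, ha, b, hb, hab, hTab⟩ :=
            Finset.exists_ne_map_eq_of_card_lt_of_maps_to hcardlt hF1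
          have hTab' : T a ha = T b hb := by
            have h1 : F a = T a ha := dif_pos ha
            have h2 : F b = T b hb := dif_pos hb
            rw [← h1, ← h2, hTab]
          have hbD : b ∈ D (T a ha) := by rw [hTab']; exact hT2 b hb
          rcases hDchain (T a ha) (by exact_mod_cast hT2 a ha) (by exact_mod_cast hbD) hab
            with h | h
          · exact hanti (by exact_mod_cast ha) (by exact_mod_cast hb) hab h
          · exact hanti (by exact_mod_cast hb) (by exact_mod_cast ha) (Ne.symm hab) h
        obtain ⟨i, hiA, hiY⟩ := this
        refine Finset.prod_eq_zero hiA ?_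
        rw [rename_X, aeval_X]
        show (if i ∈ Y then (X i : MvPolynomial (Fin n) K) else 0) = 0
        rw [if_neg hiY]
      · rw [Ideal.map_le_iff_le_comap, Ideal.span_le]
        rintro p ⟨A, hanti, hcard, rfl⟩
        simp only [SetLike.mem_coe, Ideal.mem_comap, RingHom.mem_ker]
        rw [map_prod, map_prod]
        have : ∃ i ∈ A, i ∉ Z := by
          by_contra hAZ
          push_neg at hAZ
          obtain ⟨a, ha, b, hb, hab⟩ := Finset.one_lt_card.mp (by omega : 1 < A.card)
          rcases hDchain (Fin.last m) (by exact_mod_cast hAZ a ha) (by exact_mod_cast hAZ b hb)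
            hab with h | h
          · exact hanti (by exact_mod_cast ha) (by exact_mod_cast hb) hab h
          · exact hanti (by exact_mod_cast hb) (by exact_mod_cast ha) (Ne.symm hab) h
        obtain ⟨i, hiA, hiZ⟩ := this
        refine Finset.prod_eq_zero hiA ?_
        rw [rename_X, aeval_X]
        show (if i ∈ Z then (X i : MvPolynomial (Fin n) K) else 0) = 0
        rw [if_neg hiZ]
      · rw [Ideal.span_le]
        rintro p ⟨i, rfl⟩
        simp only [SetLike.mem_coe, RingHom.mem_ker, map_sub, map_add, aeval_X]
        show (if i ∈ Y then (X i : MvPolynomial (Fin n) K) else 0) +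
          (if i ∈ Z then (X i : MvPolynomial (Fin n) K) else 0) -
          (if i ∈ u.support then (X i : MvPolynomial (Fin n) K) else 0) = 0
        by_cases hiu : i ∈ u.support
        · rcases hsplit i hiu with hiY | hiZ
          · rw [if_pos hiY, if_neg (hYZ i hiY), if_pos hiu]; ring
          · have hiY : i ∉ Y := fun h => hYZ i h hiZ
            rw [if_neg hiY, if_pos hiZ, if_pos hiu]; ring
        · have hiY : i ∉ Y := fun h => hiu (hYsub i h)
          have hiZ : i ∉ Z := fun h => hiu (hZsub i h)
          rw [if_neg hiY, if_neg hiZ, if_neg hiu]; ring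
    have h0 : aeval e (rename Sum.inl f) = 0 := hker (hf)
    rw [aeval_rename] at h0
    have hcomp : (e ∘ Sum.inl) = fun i => if i ∈ u.support then (X i : MvPolynomial (Fin n) K)
        else 0 := rfl
    rw [hcomp] at h0
    have := coeff_aeval_ite u.support f u (fun i hi => hi)
    rw [h0, coeff_zero] at this
    exact Finsupp.mem_support_iff.mp hu this.symm
  · -- easy inclusion
    rw [hjoin, Ideal.span_le]
    rintro p ⟨A, hanti, hcard, rfl⟩
    simp only [SetLike.mem_coe, Ideal.mem_comap]
    rw [map_prod]
    simp_rw [rename_X]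
    rw [← Ideal.Quotient.eq_zero_iff_mem, map_prod]
    have hxy : ∀ i : Fin n, Ideal.Quotient.mk M (X (Sum.inl i)) =
        Ideal.Quotient.mk M (X (ry i) + X (rz i)) := by
      intro i
      rw [Ideal.Quotient.eq]
      have : (X (Sum.inl i) : MvPolynomial (Fin n ⊕ (Fin n ⊕ Fin n)) K) -
          (X (ry i) + X (rz i)) =
          -(X (Sum.inr (Sum.inl i)) + X (Sum.inr (Sum.inr i)) - X (Sum.inl i)) := by
        rw [hry, hrz]; ring
      rw [this]
      exact neg_mem (hMR (Ideal.subset_span ⟨i, rfl⟩))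
    calc ∏ i ∈ A, Ideal.Quotient.mk M (X (Sum.inl i))
        = ∏ i ∈ A, Ideal.Quotient.mk M (X (ry i) + X (rz i)) :=
          Finset.prod_congr rfl (fun i _ => hxy i)
      _ = Ideal.Quotient.mk M (∏ i ∈ A, (X (ry i) + X (rz i))) := (map_prod _ _ _).symm
      _ = 0 := by
          rw [Ideal.Quotient.eq_zero_iff_mem]
          rw [Finset.prod_add]
          refine Ideal.sum_mem _ ?_
          intro S hS
          rw [Finset.mem_powerset] at hS
          by_cases hcase : m + 1 ≤ S.card
          · obtain ⟨T, hTS, hTcard⟩ := Finset.exists_subset_card_eq hcase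
            have hTanti : IsAntichain P.le (↑T : Set (Fin n)) :=
              hanti.subset (Finset.coe_subset.mpr (hTS.trans hS))
            have hgen : (rename ry) (∏ i ∈ T, X i) ∈ M :=
              hMI (Ideal.mem_map_of_mem _ (Ideal.subset_span ⟨T, hTanti, hTcard, rfl⟩))
            have hdvd : (rename ry) (∏ i ∈ T, (X i : MvPolynomial (Fin n) K)) ∣
                (∏ i ∈ S, X (ry i)) * ∏ i ∈ A \ S, X (rz i) := by
              rw [map_prod]
              simp_rw [rename_X]
              exact dvd_mul_of_dvd_left (Finset.prod_dvd_prod_of_subset T S _ hTS) _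
            obtain ⟨c, hc⟩ := hdvd
            rw [hc]
            exact Ideal.mul_mem_right _ _ hgen
          · push_neg at hcase
            have hsd : (A \ S).card = A.card - S.card := Finset.card_sdiff_of_subset hS
            have h2 : 1 < (A \ S).card := by
              have := Finset.card_le_card hS
              omega
            obtain ⟨i, hi, j, hj, hij⟩ := Finset.one_lt_card.mp h2
            have hpairsub : ({i, j} : Finset (Fin n)) ⊆ A \ S := by
              intro x hx
              rcases Finset.mem_insert.mp hx with rfl | hx
              · exact hi
              · rw [Finset.mem_singleton] at hx
                subst hx; exact hj
            have hpairanti : IsAntichain P.le (↑({i, j} : Finset (Fin n)) : Set (Fin n)) :=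
              hanti.subset (by
                refine Finset.coe_subset.mpr (hpairsub.trans Finset.sdiff_subset))
            have hpaircard : ({i, j} : Finset (Fin n)).card = 2 := by
              rw [Finset.card_insert_of_notMem (by simpa using hij), Finset.card_singleton]
            have hgen : (rename rz) (∏ x ∈ ({i, j} : Finset (Fin n)), X x) ∈ M :=
              hMJ (Ideal.mem_map_of_mem _ (Ideal.subset_span ⟨{i, j}, hpairanti, hpaircard, rfl⟩))
            have hdvd : (rename rz) (∏ x ∈ ({i, j} : Finset (Fin n)), (X x :
                MvPolynomial (Fin n) K)) ∣ (∏ i ∈ S, X (ry i)) * ∏ i ∈ A \ S, X (rz i) := by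
              rw [map_prod]
              simp_rw [rename_X]
              exact dvd_mul_of_dvd_right
                (Finset.prod_dvd_prod_of_subset _ _ _ hpairsub) _
            obtain ⟨c, hc⟩ := hdvd
            rw [hc]
            exact Ideal.mul_mem_right _ _ hgen

end JoinStep

open MvPolynomial

noncomputable def secantIdeal {K : Type*} [Field K] {n : ℕ}
    (I : Ideal (MvPolynomial (Fin n) K)) : ℕ → Ideal (MvPolynomial (Fin n) K)
  | 0 => Ideal.span (Set.range X)
  | 1 => I
  | (r + 2) => joinIdeal (secantIdeal I (r + 1)) I

section Final

variable {K : Type*} [Field K] {n : ℕ}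

lemma pairSet_eq (P : PartialOrder (Fin n)) :
    {p : MvPolynomial (Fin n) K | ∃ i j : Fin n, ¬ P.le i j ∧ ¬ P.le j i ∧ p = X i * X j}
      = antiSet P K 2 := by
  ext q
  constructor
  · rintro ⟨i, j, h1, h2, rfl⟩
    have hij : i ≠ j := by rintro rfl; exact h1 (P.le_refl i)
    refine ⟨{i, j}, ?_, ?_, ?_⟩
    · rintro x hx y hy hxy
      simp only [Finset.coe_insert, Finset.coe_singleton, Set.mem_insert_iff,
        Set.mem_singleton_iff] at hx hy
      rcases hx with rfl | rfl <;> rcases hy with rfl | rfl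
      · exact absurd rfl hxy
      · exact h1
      · exact h2
      · exact absurd rfl hxy
    · rw [Finset.card_insert_of_notMem (by simpa using hij), Finset.card_singleton]
    · rw [Finset.prod_pair hij]
  · rintro ⟨A, hanti, hcard, rfl⟩
    obtain ⟨i, j, hij, rfl⟩ := Finset.card_eq_two.mp hcard
    refine ⟨i, j, ?_, ?_, ?_⟩
    · exact hanti (by simp) (by simp) hij
    · exact hanti (by simp) (by simp) hij.symm
    · rw [Finset.prod_pair hij]

lemma secant_formula (P : PartialOrder (Fin n)) (r : ℕ) (hr : 1 ≤ r) :
    secantIdeal (Ideal.span {p : MvPolynomial (Fin n) K |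
        ∃ i j : Fin n, ¬ P.le i j ∧ ¬ P.le j i ∧ p = X i * X j}) r
      = Ideal.span (antiSet P K (r + 1)) := by
  induction r, hr using Nat.le_induction with
  | base =>
    rw [show secantIdeal (Ideal.span {p : MvPolynomial (Fin n) K |
        ∃ i j : Fin n, ¬ P.le i j ∧ ¬ P.le j i ∧ p = X i * X j}) 1
      = Ideal.span {p : MvPolynomial (Fin n) K |
        ∃ i j : Fin n, ¬ P.le i j ∧ ¬ P.le j i ∧ p = X i * X j} from rfl]
    rw [pairSet_eq]
  | succ r hr ih =>
    obtain ⟨k, rfl⟩ : ∃ k, r = k + 1 := ⟨r - 1, by omega⟩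
    rw [show secantIdeal (Ideal.span {p : MvPolynomial (Fin n) K |
        ∃ i j : Fin n, ¬ P.le i j ∧ ¬ P.le j i ∧ p = X i * X j}) (k + 1 + 1)
      = joinIdeal (secantIdeal (Ideal.span {p : MvPolynomial (Fin n) K |
        ∃ i j : Fin n, ¬ P.le i j ∧ ¬ P.le j i ∧ p = X i * X j}) (k + 1))
        (Ideal.span {p : MvPolynomial (Fin n) K |
        ∃ i j : Fin n, ¬ P.le i j ∧ ¬ P.le j i ∧ p = X i * X j}) from rfl]
    rw [ih, pairSet_eq, joinStep P (k + 1)]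

end Final

/-- (Dilworth) a subset `V` of a finite poset `P` on `[n]` can be partitioned
into `r` chains iff it contains no antichain of cardinality `r+1`; consequently, in
characteristic zero, the `r`-th secant of the Stanley–Reisner ideal `J(P)` (generated by
the 2-element antichains) is generated by the monomials `∏_{i ∈ A} x_i` for `A` an
antichain of cardinality `r+1`. -/
theorem stmt_11 (K : Type*) [Field K] [CharZero K] (n r : ℕ) (hr : 1 ≤ r)
    (P : PartialOrder (Fin n)) :
    (∀ V : Set (Fin n),
      (∃ f : Fin r → Set (Fin n), (∀ t, IsChain P.le (f t)) ∧ V = ⋃ t, f t ∧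
          ∀ s t : Fin r, s ≠ t → Disjoint (f s) (f t)) ↔
        (∀ A : Finset (Fin n), ↑A ⊆ V → IsAntichain P.le (↑A : Set (Fin n)) →
          A.card ≤ r)) ∧
    secantIdeal (Ideal.span {p : MvPolynomial (Fin n) K |
        ∃ i j : Fin n, ¬ P.le i j ∧ ¬ P.le j i ∧ p = X i * X j}) r
      = Ideal.span {p : MvPolynomial (Fin n) K |
          ∃ A : Finset (Fin n), IsAntichain P.le (↑A : Set (Fin n)) ∧ A.card = r + 1 ∧
            p = ∏ i ∈ A, X i} := by
  refine ⟨fun V => dilworth_sets P r V, ?_⟩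
  exact secant_formula P r hr
end

section
/- For any ideals I_1, ..., I_r in K[x_1,...,x_n] and any term order ≺, the initial ideal of the join is contained in the join of the initial ideals: in_≺(I_1 * ⋯ * I_r) ⊆ in_≺(I_1) * ⋯ * in_≺(I_r). -/
open MvPolynomial

/-- The leading monomial of a nonzero polynomial with respect to a linear order `ord`
on exponent vectors. -/
noncomputable def leadMonomial {K : Type*} [Field K] {n : ℕ}
    (ord : LinearOrder (Fin n →₀ ℕ)) (f : MvPolynomial (Fin n) K) (hf : f ≠ 0) :
    Fin n →₀ ℕ :=
  @Finset.max' _ ord f.support (MvPolynomial.support_nonempty.mpr hf)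

/-- The initial ideal of `I` with respect to a linear order on exponent vectors:
generated by the leading monomials of the nonzero elements of `I`. -/
noncomputable def initialIdeal {K : Type*} [Field K] {n : ℕ}
    (ord : LinearOrder (Fin n →₀ ℕ)) (I : Ideal (MvPolynomial (Fin n) K)) :
    Ideal (MvPolynomial (Fin n) K) :=
  Ideal.span {p : MvPolynomial (Fin n) K |
    ∃ f ∈ I, ∃ hf : f ≠ 0, p = monomial (leadMonomial ord f hf) (1 : K)}

/-- The join `I_1 * I_2 * ⋯ * I_{r+1}` of a finite sequence of ideals. -/
noncomputable def joinSeq {K : Type*} [Field K] {n : ℕ} :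
    (r : ℕ) → (Fin (r + 1) → Ideal (MvPolynomial (Fin n) K)) → Ideal (MvPolynomial (Fin n) K)
  | 0, I => I 0
  | r + 1, I => joinIdeal (joinSeq r (fun t => I t.castSucc)) (I (Fin.last (r + 1)))

set_option linter.unusedSectionVars false

namespace S13

variable {K : Type*} [Field K] {n : ℕ}

section Ord

variable (ord : LinearOrder (Fin n →₀ ℕ))

lemma ole_of_le (hadd : ∀ a b c : Fin n →₀ ℕ, ord.le a b → ord.le (a + c) (b + c))
    (hzero : ∀ a : Fin n →₀ ℕ, ord.le 0 a) {a b : Fin n →₀ ℕ} (h : a ≤ b) :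
    ord.le a b := by
  obtain ⟨c, hc⟩ := le_iff_exists_add.mp h
  have := hadd 0 c a (hzero c)
  rw [zero_add, add_comm] at this
  rw [hc]; exact this

lemma olt_of_le_ne {a b : Fin n →₀ ℕ} (h : ord.le a b) (hne : a ≠ b) : ord.lt a b := by
  rcases ((@lt_or_ge _ ord a b) : ord.lt a b ∨ ord.le b a) with h' | h'
  · exact h'
  · exact absurd (ord.le_antisymm _ _ h h') hne

lemma ole_of_lt {a b : Fin n →₀ ℕ} (h : ord.lt a b) : ord.le a b :=
  ((@lt_iff_le_not_ge _ ord.toPreorder a b).mp h).1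

lemma ole_trans {a b c : Fin n →₀ ℕ} (h1 : ord.le a b) (h2 : ord.le b c) : ord.le a c :=
  ord.le_trans _ _ _ h1 h2

lemma ole_cancel (hadd : ∀ a b c : Fin n →₀ ℕ, ord.le a b → ord.le (a + c) (b + c))
    {a b c : Fin n →₀ ℕ} (h : ord.le (a + c) (b + c)) : ord.le a b := by
  rcases ord.le_total a b with h' | h'
  · exact h'
  · have := hadd b a c h'
    have heq : b + c = a + c := ord.le_antisymm _ _ this h
    have : b = a := by
      have := congrArg (fun x => x - c) heq
      simpa using this
    rw [this]; exact ord.le_refl _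

lemma olt_addr (hadd : ∀ a b c : Fin n →₀ ℕ, ord.le a b → ord.le (a + c) (b + c))
    {a b : Fin n →₀ ℕ} (c : Fin n →₀ ℕ) (h : ord.lt a b) : ord.lt (a + c) (b + c) := by
  apply olt_of_le_ne ord (hadd _ _ _ (ole_of_lt ord h))
  intro heq
  have hab : a = b := by
    have := congrArg (fun x => x - c) heq
    simpa using this
  subst hab
  exact ((@lt_iff_le_not_ge _ ord.toPreorder a a).mp h).2 (ord.le_refl a)

lemma ord_wf (hadd : ∀ a b c : Fin n →₀ ℕ, ord.le a b → ord.le (a + c) (b + c))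
    (hzero : ∀ a : Fin n →₀ ℕ, ord.le 0 a) : WellFounded ord.lt := by
  rw [RelEmbedding.wellFounded_iff_isEmpty]
  constructor
  intro g
  obtain ⟨i, j, hij, hle⟩ := (Finsupp.wellQuasiOrderedLE (α := ℕ) (σ := Fin n)).wqo
    (fun k => g k)
  have h1 : ord.le (g i) (g j) := ole_of_le ord hadd hzero hle
  have h2 : ord.lt (g j) (g i) := g.map_rel_iff.mpr hij
  exact ((@lt_iff_le_not_ge _ ord.toPreorder (g j) (g i)).mp h2).2 h1

end Ord

section Lead

variable (ord : LinearOrder (Fin n →₀ ℕ))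

lemma lead_mem (f : MvPolynomial (Fin n) K) (hf : f ≠ 0) :
    leadMonomial ord f hf ∈ f.support :=
  @Finset.max'_mem _ ord _ _

lemma le_lead {f : MvPolynomial (Fin n) K} (hf : f ≠ 0) {m : Fin n →₀ ℕ}
    (hm : m ∈ f.support) : ord.le m (leadMonomial ord f hf) :=
  @Finset.le_max' _ ord _ _ hm

lemma coeff_lead_ne (f : MvPolynomial (Fin n) K) (hf : f ≠ 0) :
    coeff (leadMonomial ord f hf) f ≠ 0 :=
  MvPolynomial.mem_support_iff.mp (lead_mem ord f hf)

lemma lead_eq {f : MvPolynomial (Fin n) K} (hf : f ≠ 0) {μ : Fin n →₀ ℕ}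
    (h1 : μ ∈ f.support) (h2 : ∀ m ∈ f.support, ord.le m μ) :
    leadMonomial ord f hf = μ :=
  ord.le_antisymm _ _ (@Finset.max'_le _ ord _ _ _ h2) (@Finset.le_max' _ ord _ _ h1)

lemma lead_monomial' (a : Fin n →₀ ℕ) (k : K) (hk : k ≠ 0)
    (h : (monomial a k : MvPolynomial (Fin n) K) ≠ 0) :
    leadMonomial ord _ h = a := by
  classical
  apply lead_eq
  · simp [support_monomial, hk]
  · intro m hm
    simp [support_monomial, hk] at hm
    rw [hm]
    exact ord.le_refl a

end Lead

section Std

variable (ord : LinearOrder (Fin n →₀ ℕ))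

/-- `m` is a standard monomial for `I`. -/
def Std (I : Ideal (MvPolynomial (Fin n) K)) (m : Fin n →₀ ℕ) : Prop :=
  (monomial m (1 : K) : MvPolynomial (Fin n) K) ∉ initialIdeal ord I

lemma initialIdeal_eq (I : Ideal (MvPolynomial (Fin n) K)) :
    initialIdeal ord I = Ideal.span ((fun s => (monomial s (1 : K) : MvPolynomial (Fin n) K)) ''
      {m | ∃ f ∈ I, ∃ hf : f ≠ 0, leadMonomial ord f hf = m}) := by
  unfold initialIdeal
  congr 1
  ext p
  constructor
  · rintro ⟨f, hfI, hf, rfl⟩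
    exact ⟨_, ⟨f, hfI, hf, rfl⟩, rfl⟩
  · rintro ⟨m, ⟨f, hfI, hf, rfl⟩, rfl⟩
    exact ⟨f, hfI, hf, rfl⟩

lemma not_std_iff (I : Ideal (MvPolynomial (Fin n) K)) (m : Fin n →₀ ℕ) :
    ¬ Std ord I m ↔ ∃ f ∈ I, ∃ hf : f ≠ 0, leadMonomial ord f hf ≤ m := by
  unfold Std
  classical
  rw [not_not, initialIdeal_eq, mem_ideal_span_monomial_image]
  simp only [support_monomial, if_neg (one_ne_zero (α := K)), Finset.mem_singleton]
  constructor
  · intro h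
    obtain ⟨s, ⟨f, hfI, hf, rfl⟩, hle⟩ := h m rfl
    exact ⟨f, hfI, hf, hle⟩
  · rintro ⟨f, hfI, hf, hle⟩ x rfl
    exact ⟨_, ⟨f, hfI, hf, rfl⟩, hle⟩

lemma mem_initial_of {I : Ideal (MvPolynomial (Fin n) K)} {f : MvPolynomial (Fin n) K}
    (hfI : f ∈ I) (hf : f ≠ 0) :
    (monomial (leadMonomial ord f hf) (1 : K)) ∈ initialIdeal ord I :=
  Ideal.subset_span ⟨f, hfI, hf, rfl⟩

lemma eq_zero_of_std {I : Ideal (MvPolynomial (Fin n) K)} {s : MvPolynomial (Fin n) K}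
    (hs : s ∈ I) (hstd : ∀ m ∈ s.support, Std ord I m) : s = 0 := by
  by_contra h
  exact hstd _ (lead_mem ord s h) (mem_initial_of ord hs h)

end Std

section NF

variable (ord : LinearOrder (Fin n →₀ ℕ))
  (hadd : ∀ a b c : Fin n →₀ ℕ, ord.le a b → ord.le (a + c) (b + c))
  (hzero : ∀ a : Fin n →₀ ℕ, ord.le 0 a)

include hadd hzero

lemma nf_exists_aux (I : Ideal (MvPolynomial (Fin n) K)) :
    ∀ a : Fin n →₀ ℕ, ∀ f : MvPolynomial (Fin n) K, ∀ hf : f ≠ 0,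
      leadMonomial ord f hf = a →
      ∃ s : MvPolynomial (Fin n) K, (f - s ∈ I) ∧ (∀ m ∈ s.support, Std ord I m) ∧
        (∀ m ∈ s.support, ord.le m a) := by
  classical
  intro a
  induction a using (ord_wf ord hadd hzero).induction with
  | _ a IH =>
  intro f hf hla
  set c := coeff a f with hc
  have hcne : c ≠ 0 := by rw [hc, ← hla]; exact coeff_lead_ne ord f hf
  by_cases hstd : Std ord I a
  · -- leading monomial is standard; strip it off
    set f' := f - monomial a c with hf'
    have hsupp : ∀ m ∈ f'.support, m ∈ f.support ∧ m ≠ a := by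
      intro m hm
      rw [MvPolynomial.mem_support_iff] at hm
      rw [hf', MvPolynomial.coeff_sub, coeff_monomial] at hm
      by_cases hma : m = a
      · subst hma; simp [hc] at hm
      · rw [if_neg (Ne.symm hma)] at hm
        simp only [sub_zero] at hm
        exact ⟨MvPolynomial.mem_support_iff.mpr hm, hma⟩
    by_cases h0 : f' = 0
    · refine ⟨monomial a c, ?_, ?_, ?_⟩
      · rw [show f - monomial a c = f' from rfl, h0]; exact I.zero_mem
      · intro m hm
        rw [support_monomial, if_neg hcne, Finset.mem_singleton] at hm
        rw [hm]; exact hstd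
      · intro m hm
        rw [support_monomial, if_neg hcne, Finset.mem_singleton] at hm
        rw [hm]; exact ord.le_refl a
    · have hlt : ord.lt (leadMonomial ord f' h0) a := by
        obtain ⟨h1, h2⟩ := hsupp _ (lead_mem ord f' h0)
        exact olt_of_le_ne ord (hla ▸ le_lead ord hf h1) h2
      obtain ⟨s', hs1, hs2, hs3⟩ := IH _ hlt f' h0 rfl
      refine ⟨s' + monomial a c, ?_, ?_, ?_⟩
      · have : f - (s' + monomial a c) = f' - s' := by rw [hf']; ring
        rw [this]; exact hs1
      · intro m hm
        rcases Finset.mem_union.mp (MvPolynomial.support_add hm) with hm' | hm'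
        · exact hs2 m hm'
        · rw [support_monomial, if_neg hcne, Finset.mem_singleton] at hm'
          rw [hm']; exact hstd
      · intro m hm
        rcases Finset.mem_union.mp (MvPolynomial.support_add hm) with hm' | hm'
        · exact ole_trans ord (hs3 m hm') (ole_of_lt ord hlt)
        · rw [support_monomial, if_neg hcne, Finset.mem_singleton] at hm'
          rw [hm']; exact ord.le_refl a
  · -- leading monomial is reducible by some element of I
    obtain ⟨h, hI, hh, hle⟩ := (not_std_iff ord I a).mp hstd
    set m₀ := leadMonomial ord h hh with hm₀
    set e := a - m₀ with he
    have hea : e + m₀ = a := by rw [he]; exact tsub_add_cancel_of_le hle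
    set lam := c / coeff m₀ h with hlam
    have hcm₀ : coeff m₀ h ≠ 0 := coeff_lead_ne ord h hh
    have hlamne : lam ≠ 0 := div_ne_zero hcne hcm₀
    set h' := monomial e lam * h with hh'
    have hh'I : h' ∈ I := Ideal.mul_mem_left _ _ hI
    have hcoeffa : coeff a h' = c := by
      rw [hh', ← hea, coeff_monomial_mul, hlam, div_mul_cancel₀ _ hcm₀]
    have hsupph' : ∀ m ∈ h'.support, ord.le m a ∧ (m ≠ a → True) := by
      exact fun m hm => ⟨by
        have := MvPolynomial.support_mul _ _ hm
        rw [Finset.mem_add] at this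
        obtain ⟨u, hu, v, hv, rfl⟩ := this
        rw [support_monomial, if_neg hlamne, Finset.mem_singleton] at hu
        subst hu
        have : ord.le v m₀ := le_lead ord hh hv
        have := hadd v m₀ e this
        rw [add_comm v e, add_comm m₀ e] at this
        rw [hea] at this
        exact this, fun _ => trivial⟩
    set f' := f - h' with hf'
    have hsupp : ∀ m ∈ f'.support, ord.le m a ∧ m ≠ a := by
      intro m hm
      have hmne : m ≠ a := by
        intro hma
        rw [MvPolynomial.mem_support_iff, hf', MvPolynomial.coeff_sub, hma, hcoeffa] at hm
        simp [hc] at hm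
      constructor
      · have hm' : m ∈ f.support ∪ h'.support := by
          classical
          have : f' = f + (-h') := by rw [hf']; ring
          have h2 := MvPolynomial.support_add (this ▸ hm)
          rwa [MvPolynomial.support_neg] at h2
        rcases Finset.mem_union.mp hm' with hm'' | hm''
        · exact hla ▸ le_lead ord hf hm''
        · exact (hsupph' m hm'').1
      · exact hmne
    by_cases h0 : f' = 0
    · refine ⟨0, ?_, by simp, by simp⟩
      have : f = h' := by rw [← sub_eq_zero]; exact h0
      rw [sub_zero, this]; exact hh'I
    · have hlt : ord.lt (leadMonomial ord f' h0) a := by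
        obtain ⟨h1, h2⟩ := hsupp _ (lead_mem ord f' h0)
        exact olt_of_le_ne ord h1 h2
      obtain ⟨s', hs1, hs2, hs3⟩ := IH _ hlt f' h0 rfl
      refine ⟨s', ?_, hs2, ?_⟩
      · have : f - s' = (f' - s') + h' := by rw [hf']; ring
        rw [this]; exact I.add_mem hs1 hh'I
      · intro m hm
        exact ole_trans ord (hs3 m hm) (ole_of_lt ord hlt)

lemma nf_exists (I : Ideal (MvPolynomial (Fin n) K)) (f : MvPolynomial (Fin n) K) :
    ∃ s : MvPolynomial (Fin n) K, (f - s ∈ I) ∧ (∀ m ∈ s.support, Std ord I m) ∧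
      (∀ m ∈ s.support, ∃ u ∈ f.support, ord.le m u) := by
  by_cases hf : f = 0
  · exact ⟨0, by simp [hf, I.zero_mem], by simp, by simp⟩
  · obtain ⟨s, h1, h2, h3⟩ := nf_exists_aux ord hadd hzero I (leadMonomial ord f hf) f hf rfl
    exact ⟨s, h1, h2, fun m hm => ⟨leadMonomial ord f hf, lead_mem ord f hf, h3 m hm⟩⟩

noncomputable def NF (I : Ideal (MvPolynomial (Fin n) K)) (f : MvPolynomial (Fin n) K) :
    MvPolynomial (Fin n) K :=
  Classical.choose (nf_exists ord hadd hzero I f)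

lemma NF_sub_mem (I : Ideal (MvPolynomial (Fin n) K)) (f : MvPolynomial (Fin n) K) :
    f - NF ord hadd hzero I f ∈ I :=
  (Classical.choose_spec (nf_exists ord hadd hzero I f)).1

lemma NF_std (I : Ideal (MvPolynomial (Fin n) K)) (f : MvPolynomial (Fin n) K) :
    ∀ m ∈ (NF ord hadd hzero I f).support, Std ord I m :=
  (Classical.choose_spec (nf_exists ord hadd hzero I f)).2.1

lemma NF_bound (I : Ideal (MvPolynomial (Fin n) K)) (f : MvPolynomial (Fin n) K) :
    ∀ m ∈ (NF ord hadd hzero I f).support, ∃ u ∈ f.support, ord.le m u :=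
  (Classical.choose_spec (nf_exists ord hadd hzero I f)).2.2

omit hadd hzero in
lemma nf_unique {I : Ideal (MvPolynomial (Fin n) K)} {f s₁ s₂ : MvPolynomial (Fin n) K}
    (h1 : f - s₁ ∈ I) (h1' : ∀ m ∈ s₁.support, Std ord I m)
    (h2 : f - s₂ ∈ I) (h2' : ∀ m ∈ s₂.support, Std ord I m) : s₁ = s₂ := by
  classical
  have hmem : s₁ - s₂ ∈ I := by
    have := I.sub_mem h2 h1
    have heq : (f - s₂) - (f - s₁) = s₁ - s₂ := by ring
    rwa [heq] at this
  have hsupp : ∀ m ∈ (s₁ - s₂).support, Std ord I m := by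
    intro m hm
    have : s₁ - s₂ = s₁ + (-s₂) := by ring
    have h3 := MvPolynomial.support_add (this ▸ hm)
    rw [MvPolynomial.support_neg] at h3
    rcases Finset.mem_union.mp h3 with h4 | h4
    · exact h1' m h4
    · exact h2' m h4
  have := eq_zero_of_std ord hmem hsupp
  rwa [sub_eq_zero] at this

lemma NF_eq_of {I : Ideal (MvPolynomial (Fin n) K)} {f s : MvPolynomial (Fin n) K}
    (h1 : f - s ∈ I) (h2 : ∀ m ∈ s.support, Std ord I m) :
    NF ord hadd hzero I f = s :=
  nf_unique ord (NF_sub_mem ord hadd hzero I f) (NF_std ord hadd hzero I f) h1 h2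

lemma NF_add (I : Ideal (MvPolynomial (Fin n) K)) (f g : MvPolynomial (Fin n) K) :
    NF ord hadd hzero I (f + g) = NF ord hadd hzero I f + NF ord hadd hzero I g := by
  classical
  apply NF_eq_of
  · have heq : f + g - (NF ord hadd hzero I f + NF ord hadd hzero I g)
        = (f - NF ord hadd hzero I f) + (g - NF ord hadd hzero I g) := by ring
    rw [heq]
    exact I.add_mem (NF_sub_mem ord hadd hzero I f) (NF_sub_mem ord hadd hzero I g)
  · intro m hm
    rcases Finset.mem_union.mp (MvPolynomial.support_add hm) with h | h
    · exact NF_std ord hadd hzero I f m h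
    · exact NF_std ord hadd hzero I g m h

lemma NF_smul (I : Ideal (MvPolynomial (Fin n) K)) (k : K) (f : MvPolynomial (Fin n) K) :
    NF ord hadd hzero I (k • f) = k • NF ord hadd hzero I f := by
  apply NF_eq_of
  · have heq : k • f - k • NF ord hadd hzero I f = k • (f - NF ord hadd hzero I f) := by
      rw [smul_sub]
    rw [heq, smul_eq_C_mul]
    exact Ideal.mul_mem_left _ _ (NF_sub_mem ord hadd hzero I f)
  · intro m hm
    exact NF_std ord hadd hzero I f m (MvPolynomial.support_smul hm)

lemma NF_of_mem {I : Ideal (MvPolynomial (Fin n) K)} {f : MvPolynomial (Fin n) K}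
    (hf : f ∈ I) : NF ord hadd hzero I f = 0 :=
  NF_eq_of ord hadd hzero (by simpa using hf) (by simp)

/-- The linear functional `f ↦` coefficient of `b` in the normal form of `f`. -/
noncomputable def alphaH (I : Ideal (MvPolynomial (Fin n) K)) (b : Fin n →₀ ℕ) :
    MvPolynomial (Fin n) K →+ K where
  toFun f := coeff b (NF ord hadd hzero I f)
  map_zero' := by show coeff b (NF ord hadd hzero I 0) = 0; rw [NF_of_mem ord hadd hzero I.zero_mem]; simp
  map_add' f g := by
    show coeff b (NF ord hadd hzero I (f + g)) = coeff b _ + coeff b _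
    rw [NF_add ord hadd hzero, MvPolynomial.coeff_add]

lemma alphaH_of_mem {I : Ideal (MvPolynomial (Fin n) K)} (b : Fin n →₀ ℕ)
    {f : MvPolynomial (Fin n) K} (hf : f ∈ I) : alphaH ord hadd hzero I b f = 0 := by
  show coeff b (NF ord hadd hzero I f) = 0
  rw [NF_of_mem ord hadd hzero hf]; simp

lemma alphaH_monomial (I : Ideal (MvPolynomial (Fin n) K)) (b m : Fin n →₀ ℕ) (k : K) :
    alphaH ord hadd hzero I b (monomial m k)
      = k * alphaH ord hadd hzero I b (monomial m 1) := by
  show coeff b (NF ord hadd hzero I (monomial m k)) = _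
  have : (monomial m k : MvPolynomial (Fin n) K) = k • monomial m 1 := by
    rw [smul_monomial, smul_eq_mul, mul_one]
  rw [this, NF_smul ord hadd hzero, MvPolynomial.coeff_smul, smul_eq_mul]
  rfl

lemma alphaH_self {I : Ideal (MvPolynomial (Fin n) K)} {b : Fin n →₀ ℕ}
    (hb : Std ord I b) : alphaH ord hadd hzero I b (monomial b 1) = 1 := by
  classical
  show coeff b (NF ord hadd hzero I (monomial b 1)) = 1
  have : NF ord hadd hzero I (monomial b 1) = monomial b 1 := by
    apply NF_eq_of
    · simp
    · intro m hm
      rw [support_monomial, if_neg (one_ne_zero (α := K)), Finset.mem_singleton] at hm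
      rw [hm]; exact hb
  rw [this, coeff_monomial, if_pos rfl]

lemma alphaH_bound {I : Ideal (MvPolynomial (Fin n) K)} {b m : Fin n →₀ ℕ}
    (h : ¬ ord.le b m) : alphaH ord hadd hzero I b (monomial m 1) = 0 := by
  classical
  show coeff b (NF ord hadd hzero I (monomial m 1)) = 0
  by_contra hc
  obtain ⟨u, hu, hle⟩ := NF_bound ord hadd hzero I (monomial m 1) b
    (MvPolynomial.mem_support_iff.mpr hc)
  rw [support_monomial, if_neg (one_ne_zero (α := K)), Finset.mem_singleton] at hu
  exact h (hu ▸ hle)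

end NF

section Proj

/-- First (y-) component of an exponent vector on `Fin n ⊕ Fin n`. -/
noncomputable def pp1 (d : (Fin n ⊕ Fin n) →₀ ℕ) : Fin n →₀ ℕ := (Finsupp.sumFinsuppEquivProdFinsupp d).1

/-- Second (z-) component of an exponent vector on `Fin n ⊕ Fin n`. -/
noncomputable def pp2 (d : (Fin n ⊕ Fin n) →₀ ℕ) : Fin n →₀ ℕ := (Finsupp.sumFinsuppEquivProdFinsupp d).2

lemma pp1_apply (d : (Fin n ⊕ Fin n) →₀ ℕ) (x : Fin n) : pp1 d x = d (Sum.inl x) :=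
  Finsupp.fst_sumFinsuppEquivProdFinsupp d x

lemma pp2_apply (d : (Fin n ⊕ Fin n) →₀ ℕ) (x : Fin n) : pp2 d x = d (Sum.inr x) :=
  Finsupp.snd_sumFinsuppEquivProdFinsupp d x

lemma pp1_zero : pp1 (0 : (Fin n ⊕ Fin n) →₀ ℕ) = 0 := by
  ext x; rw [pp1_apply]; rfl

lemma pp2_zero : pp2 (0 : (Fin n ⊕ Fin n) →₀ ℕ) = 0 := by
  ext x; rw [pp2_apply]; rfl

lemma pp1_add (u v : (Fin n ⊕ Fin n) →₀ ℕ) : pp1 (u + v) = pp1 u + pp1 v := by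
  ext x; simp [pp1_apply]

lemma pp2_add (u v : (Fin n ⊕ Fin n) →₀ ℕ) : pp2 (u + v) = pp2 u + pp2 v := by
  ext x; simp [pp2_apply]

lemma pp1_mapl (m : Fin n →₀ ℕ) : pp1 (Finsupp.mapDomain Sum.inl m) = m := by
  ext x; rw [pp1_apply, Finsupp.mapDomain_apply Sum.inl_injective]

lemma pp1_mapr (m : Fin n →₀ ℕ) : pp1 (Finsupp.mapDomain Sum.inr m) = 0 := by
  ext x; rw [pp1_apply, Finsupp.mapDomain_notin_range]
  · rfl
  · rintro ⟨y, h⟩; exact Sum.inr_ne_inl h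

lemma pp2_mapl (m : Fin n →₀ ℕ) : pp2 (Finsupp.mapDomain Sum.inl m) = 0 := by
  ext x; rw [pp2_apply, Finsupp.mapDomain_notin_range]
  · rfl
  · rintro ⟨y, h⟩; exact Sum.inl_ne_inr h

lemma pp2_mapr (m : Fin n →₀ ℕ) : pp2 (Finsupp.mapDomain Sum.inr m) = m := by
  ext x; rw [pp2_apply, Finsupp.mapDomain_apply Sum.inr_injective]

lemma pp_recomb (d : (Fin n ⊕ Fin n) →₀ ℕ) :
    Finsupp.mapDomain Sum.inl (pp1 d) + Finsupp.mapDomain Sum.inr (pp2 d) = d := by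
  ext w
  cases w with
  | inl x =>
    rw [Finsupp.add_apply, Finsupp.mapDomain_apply Sum.inl_injective,
      Finsupp.mapDomain_notin_range _ _ (by rintro ⟨y, h⟩; exact Sum.inr_ne_inl h),
      pp1_apply, add_zero]
  | inr x =>
    rw [Finsupp.add_apply, Finsupp.mapDomain_apply Sum.inr_injective,
      Finsupp.mapDomain_notin_range _ _ (by rintro ⟨y, h⟩; exact Sum.inl_ne_inr h),
      pp2_apply, zero_add]

lemma pp_inj {d d' : (Fin n ⊕ Fin n) →₀ ℕ} (h1 : pp1 d = pp1 d') (h2 : pp2 d = pp2 d') :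
    d = d' := by
  rw [← pp_recomb d, ← pp_recomb d', h1, h2]

lemma pp1_single_l (i : Fin n) (k : ℕ) : pp1 (Finsupp.single (Sum.inl i) k) = Finsupp.single i k := by
  ext x; rw [pp1_apply]; simp [Finsupp.single_apply]

lemma pp2_single_l (i : Fin n) (k : ℕ) : pp2 (Finsupp.single (Sum.inl i) k) = 0 := by
  ext x; rw [pp2_apply]; simp [Finsupp.single_apply]

lemma pp1_single_r (i : Fin n) (k : ℕ) : pp1 (Finsupp.single (Sum.inr i) k) = 0 := by
  ext x; rw [pp1_apply]; simp [Finsupp.single_apply]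

lemma pp2_single_r (i : Fin n) (k : ℕ) : pp2 (Finsupp.single (Sum.inr i) k) = Finsupp.single i k := by
  ext x; rw [pp2_apply]; simp [Finsupp.single_apply]

end Proj

section Sigma

/-- The substitution `x_i ↦ y_i + z_i`. -/
noncomputable def ss (K : Type*) [Field K] (n : ℕ) (i : Fin n) :
    MvPolynomial (Fin n ⊕ Fin n) K :=
  X (Sum.inl i) + X (Sum.inr i)

lemma supp_ss_pow (i : Fin n) (k : ℕ) :
    ∀ d ∈ ((ss K n i) ^ k).support, pp1 d + pp2 d = Finsupp.single i k := by
  classical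
  induction k with
  | zero =>
    intro d hd
    rw [pow_zero] at hd
    have : d = 0 := by
      rw [MvPolynomial.mem_support_iff] at hd
      by_contra h
      rw [MvPolynomial.coeff_one, if_neg (fun he => h he.symm)] at hd
      exact hd rfl
    subst this
    rw [pp1_zero, pp2_zero, add_zero, Finsupp.single_zero]
  | succ k IH =>
    intro d hd
    rw [pow_succ] at hd
    have := MvPolynomial.support_mul _ _ hd
    rw [Finset.mem_add] at this
    obtain ⟨u, hu, v, hv, rfl⟩ := this
    have h1 := IH u hu
    have h2 : pp1 v + pp2 v = Finsupp.single i 1 := by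
      unfold ss at hv
      rcases Finset.mem_union.mp (MvPolynomial.support_add hv) with h | h
      · rw [support_X] at h
        rw [Finset.mem_singleton] at h
        subst h
        rw [pp1_single_l, pp2_single_l, add_zero]
      · rw [support_X] at h
        rw [Finset.mem_singleton] at h
        subst h
        rw [pp1_single_r, pp2_single_r, zero_add]
    rw [pp1_add, pp2_add]
    have : pp1 u + pp1 v + (pp2 u + pp2 v) = (pp1 u + pp2 u) + (pp1 v + pp2 v) :=
      add_add_add_comm _ _ _ _
    rw [this, h1, h2, ← Finsupp.single_add]

lemma supp_ss_prod (s : Finset (Fin n)) (e : Fin n → ℕ) :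
    ∀ d ∈ (∏ i ∈ s, (ss K n i) ^ (e i)).support,
      pp1 d + pp2 d = ∑ i ∈ s, Finsupp.single i (e i) := by
  classical
  induction s using Finset.induction with
  | empty =>
    intro d hd
    rw [Finset.prod_empty] at hd
    have : d = 0 := by
      rw [MvPolynomial.mem_support_iff] at hd
      by_contra h
      rw [MvPolynomial.coeff_one, if_neg (fun he => h he.symm)] at hd
      exact hd rfl
    subst this
    rw [Finset.sum_empty, pp1_zero, pp2_zero, add_zero]
  | insert j t hni IH =>
    intro d hd
    rw [Finset.prod_insert hni] at hd
    have := MvPolynomial.support_mul _ _ hd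
    rw [Finset.mem_add] at this
    obtain ⟨u, hu, v, hv, rfl⟩ := this
    rw [pp1_add, pp2_add, Finset.sum_insert hni]
    have h1 := supp_ss_pow j (e j) u hu
    have h2 := IH v hv
    have : pp1 u + pp1 v + (pp2 u + pp2 v) = (pp1 u + pp2 u) + (pp1 v + pp2 v) :=
      add_add_add_comm _ _ _ _
    rw [this, h1, h2]

lemma supp_aeval_monomial (m : Fin n →₀ ℕ) (k : K) :
    ∀ d ∈ (aeval (ss K n) (monomial m k) : MvPolynomial (Fin n ⊕ Fin n) K).support,
      pp1 d + pp2 d = m := by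
  intro d hd
  rw [aeval_monomial] at hd
  have hd' : d ∈ (m.prod fun i e => (ss K n i) ^ e).support := by
    rw [MvPolynomial.mem_support_iff] at hd ⊢
    intro h
    rw [MvPolynomial.algebraMap_eq, coeff_C_mul, h, mul_zero] at hd
    exact hd rfl
  have := supp_ss_prod m.support (fun i => m i) d hd'
  rw [this]
  exact Finsupp.sum_single m

lemma collapse_mem_of_supp (f : MvPolynomial (Fin n) K) (d : (Fin n ⊕ Fin n) →₀ ℕ)
    (hd : d ∈ (aeval (ss K n) f : MvPolynomial (Fin n ⊕ Fin n) K).support) :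
    pp1 d + pp2 d ∈ f.support := by
  classical
  rw [MvPolynomial.mem_support_iff] at hd
  conv at hd => rw [f.as_sum, map_sum, MvPolynomial.coeff_sum]
  obtain ⟨m, hm, hne⟩ := Finset.exists_ne_zero_of_sum_ne_zero hd
  have := supp_aeval_monomial m (coeff m f) d (MvPolynomial.mem_support_iff.mpr hne)
  rwa [this]

lemma coeff_aeval_eq (f : MvPolynomial (Fin n) K) (a : Fin n →₀ ℕ)
    (d : (Fin n ⊕ Fin n) →₀ ℕ) (hcol : pp1 d + pp2 d = a) (ha : a ∈ f.support) :
    coeff d (aeval (ss K n) f : MvPolynomial (Fin n ⊕ Fin n) K)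
      = coeff a f * coeff d (aeval (ss K n) (monomial a (1:K)) : MvPolynomial (Fin n ⊕ Fin n) K) := by
  classical
  conv_lhs => rw [f.as_sum, map_sum, MvPolynomial.coeff_sum]
  rw [Finset.sum_eq_single_of_mem a ha]
  · rw [aeval_monomial, aeval_monomial, MvPolynomial.algebraMap_eq,
      coeff_C_mul, coeff_C_mul, one_mul]
  · intro m hm hne
    by_contra h
    have := supp_aeval_monomial m (coeff m f) d (MvPolynomial.mem_support_iff.mpr h)
    rw [hcol] at this
    exact hne this.symm

end Sigma

section Wfun

/-- Weighted sum of coefficients. -/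
noncomputable def W (c : ((Fin n ⊕ Fin n) →₀ ℕ) → K) :
    MvPolynomial (Fin n ⊕ Fin n) K →+ K where
  toFun g := ∑ d ∈ g.support, coeff d g * c d
  map_zero' := by simp
  map_add' g h := by
    classical
    show ∑ d ∈ (g + h).support, coeff d (g + h) * c d
      = (∑ d ∈ g.support, coeff d g * c d) + ∑ d ∈ h.support, coeff d h * c d
    rw [Finset.sum_subset (MvPolynomial.support_add (p := g) (q := h))
      (fun d _ hd => by rw [MvPolynomial.notMem_support_iff.mp hd, zero_mul])]
    have : ∀ d ∈ g.support ∪ h.support, coeff d (g + h) * c d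
        = coeff d g * c d + coeff d h * c d := by
      intro d _
      rw [MvPolynomial.coeff_add, add_mul]
    rw [Finset.sum_congr rfl this, Finset.sum_add_distrib]
    congr 1
    · exact (Finset.sum_subset Finset.subset_union_left
        (fun d _ hd => by rw [MvPolynomial.notMem_support_iff.mp hd, zero_mul])).symm
    · exact (Finset.sum_subset Finset.subset_union_right
        (fun d _ hd => by rw [MvPolynomial.notMem_support_iff.mp hd, zero_mul])).symm

lemma W_monomial (c : ((Fin n ⊕ Fin n) →₀ ℕ) → K) (d : (Fin n ⊕ Fin n) →₀ ℕ) (k : K) :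
    W c (monomial d k) = k * c d := by
  classical
  show ∑ e ∈ (monomial d k).support, coeff e (monomial d k) * c e = k * c d
  by_cases hk : k = 0
  · simp [hk]
  · rw [support_monomial, if_neg hk, Finset.sum_singleton, coeff_monomial, if_pos rfl]

end Wfun

section Vanish

variable (ord : LinearOrder (Fin n →₀ ℕ))
  (hadd : ∀ a b c : Fin n →₀ ℕ, ord.le a b → ord.le (a + c) (b + c))
  (hzero : ∀ a : Fin n →₀ ℕ, ord.le 0 a)

/-- The coefficient functional used in the main argument. -/
noncomputable def cf (I J : Ideal (MvPolynomial (Fin n) K)) (b c : Fin n →₀ ℕ)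
    (d : (Fin n ⊕ Fin n) →₀ ℕ) : K :=
  alphaH ord hadd hzero I b (monomial (pp1 d) 1) * alphaH ord hadd hzero J c (monomial (pp2 d) 1)

lemma monomial_mul_eq_sum (e : Fin n →₀ ℕ) (h : MvPolynomial (Fin n) K) :
    (monomial e (1 : K)) * h = ∑ m ∈ h.support, monomial (e + m) (coeff m h) := by
  conv_lhs => rw [h.as_sum, Finset.mul_sum]
  apply Finset.sum_congr rfl
  intro m _
  rw [monomial_mul, one_mul]

lemma W_mul_rename_left (I J : Ideal (MvPolynomial (Fin n) K)) (b c : Fin n →₀ ℕ)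
    {h : MvPolynomial (Fin n) K} (hh : h ∈ I) (v : MvPolynomial (Fin n ⊕ Fin n) K) :
    W (cf ord hadd hzero I J b c) (v * rename Sum.inl h) = 0 := by
  classical
  conv_lhs => rw [v.as_sum, Finset.sum_mul, map_sum]
  apply Finset.sum_eq_zero
  intro d _
  have hren : (rename Sum.inl h : MvPolynomial (Fin n ⊕ Fin n) K)
      = ∑ m ∈ h.support, monomial (Finsupp.mapDomain Sum.inl m) (coeff m h) := by
    conv_lhs => rw [h.as_sum, map_sum]
    apply Finset.sum_congr rfl
    intro m _
    rw [rename_monomial]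
  rw [hren, Finset.mul_sum]
  have : ∀ m ∈ h.support, monomial d (coeff d v) * monomial (Finsupp.mapDomain Sum.inl m) (coeff m h)
      = monomial (d + Finsupp.mapDomain Sum.inl m) (coeff d v * coeff m h) := by
    intro m _
    rw [monomial_mul]
  rw [Finset.sum_congr rfl this, map_sum]
  have hterm : ∀ m ∈ h.support,
      W (cf ord hadd hzero I J b c) (monomial (d + Finsupp.mapDomain Sum.inl m) (coeff d v * coeff m h))
      = (coeff d v * alphaH ord hadd hzero J c (monomial (pp2 d) 1))
        * (alphaH ord hadd hzero I b (monomial (pp1 d + m) (coeff m h))) := by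
    intro m _
    rw [W_monomial]
    unfold cf
    rw [pp1_add, pp2_add, pp1_mapl, pp2_mapl, add_zero,
      alphaH_monomial ord hadd hzero I b (pp1 d + m) (coeff m h)]
    ring
  rw [Finset.sum_congr rfl hterm, ← Finset.mul_sum, ← map_sum]
  have : (∑ m ∈ h.support, monomial (pp1 d + m) (coeff m h)) = monomial (pp1 d) (1:K) * h :=
    (monomial_mul_eq_sum (pp1 d) h).symm
  rw [this, alphaH_of_mem ord hadd hzero b (Ideal.mul_mem_left _ _ hh), mul_zero]

lemma W_mul_rename_right (I J : Ideal (MvPolynomial (Fin n) K)) (b c : Fin n →₀ ℕ)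
    {h : MvPolynomial (Fin n) K} (hh : h ∈ J) (v : MvPolynomial (Fin n ⊕ Fin n) K) :
    W (cf ord hadd hzero I J b c) (v * rename Sum.inr h) = 0 := by
  classical
  conv_lhs => rw [v.as_sum, Finset.sum_mul, map_sum]
  apply Finset.sum_eq_zero
  intro d _
  have hren : (rename Sum.inr h : MvPolynomial (Fin n ⊕ Fin n) K)
      = ∑ m ∈ h.support, monomial (Finsupp.mapDomain Sum.inr m) (coeff m h) := by
    conv_lhs => rw [h.as_sum, map_sum]
    apply Finset.sum_congr rfl
    intro m _
    rw [rename_monomial]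
  rw [hren, Finset.mul_sum]
  have : ∀ m ∈ h.support, monomial d (coeff d v) * monomial (Finsupp.mapDomain Sum.inr m) (coeff m h)
      = monomial (d + Finsupp.mapDomain Sum.inr m) (coeff d v * coeff m h) := by
    intro m _
    rw [monomial_mul]
  rw [Finset.sum_congr rfl this, map_sum]
  have hterm : ∀ m ∈ h.support,
      W (cf ord hadd hzero I J b c) (monomial (d + Finsupp.mapDomain Sum.inr m) (coeff d v * coeff m h))
      = (coeff d v * alphaH ord hadd hzero I b (monomial (pp1 d) 1))
        * (alphaH ord hadd hzero J c (monomial (pp2 d + m) (coeff m h))) := by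
    intro m _
    rw [W_monomial]
    unfold cf
    rw [pp1_add, pp2_add, pp2_mapr, pp1_mapr, add_zero,
      alphaH_monomial ord hadd hzero J c (pp2 d + m) (coeff m h)]
    ring
  rw [Finset.sum_congr rfl hterm, ← Finset.mul_sum, ← map_sum]
  have : (∑ m ∈ h.support, monomial (pp2 d + m) (coeff m h)) = monomial (pp2 d) (1:K) * h :=
    (monomial_mul_eq_sum (pp2 d) h).symm
  rw [this, alphaH_of_mem ord hadd hzero c (Ideal.mul_mem_left _ _ hh), mul_zero]

lemma W_vanish_left (I J : Ideal (MvPolynomial (Fin n) K)) (b c : Fin n →₀ ℕ)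
    {p : MvPolynomial (Fin n ⊕ Fin n) K}
    (hp : p ∈ Ideal.map (rename (Sum.inl : Fin n → Fin n ⊕ Fin n)) I) :
    W (cf ord hadd hzero I J b c) p = 0 := by
  let T : Ideal (MvPolynomial (Fin n ⊕ Fin n) K) :=
    { carrier := {q | ∀ v, W (cf ord hadd hzero I J b c) (v * q) = 0}
      add_mem' := fun hq hq' v => by rw [mul_add, map_add, hq v, hq' v, add_zero]
      zero_mem' := fun v => by rw [mul_zero, map_zero]
      smul_mem' := fun u q hq v => by
        rw [smul_eq_mul, ← mul_assoc]
        exact hq (v * u) }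
  have hle : Ideal.map (rename (Sum.inl : Fin n → Fin n ⊕ Fin n)) I ≤ T := by
    rw [Ideal.map_le_iff_le_comap]
    intro h hh
    exact fun v => W_mul_rename_left ord hadd hzero I J b c hh v
  have := hle hp 1
  rwa [one_mul] at this

lemma W_vanish_right (I J : Ideal (MvPolynomial (Fin n) K)) (b c : Fin n →₀ ℕ)
    {p : MvPolynomial (Fin n ⊕ Fin n) K}
    (hp : p ∈ Ideal.map (rename (Sum.inr : Fin n → Fin n ⊕ Fin n)) J) :
    W (cf ord hadd hzero I J b c) p = 0 := by
  let T : Ideal (MvPolynomial (Fin n ⊕ Fin n) K) :=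
    { carrier := {q | ∀ v, W (cf ord hadd hzero I J b c) (v * q) = 0}
      add_mem' := fun hq hq' v => by rw [mul_add, map_add, hq v, hq' v, add_zero]
      zero_mem' := fun v => by rw [mul_zero, map_zero]
      smul_mem' := fun u q hq v => by
        rw [smul_eq_mul, ← mul_assoc]
        exact hq (v * u) }
  have hle : Ideal.map (rename (Sum.inr : Fin n → Fin n ⊕ Fin n)) J ≤ T := by
    rw [Ideal.map_le_iff_le_comap]
    intro h hh
    exact fun v => W_mul_rename_right ord hadd hzero I J b c hh v
  have := hle hp 1
  rwa [one_mul] at this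

lemma W_vanish_sup (I J : Ideal (MvPolynomial (Fin n) K)) (b c : Fin n →₀ ℕ)
    {g : MvPolynomial (Fin n ⊕ Fin n) K}
    (hg : g ∈ Ideal.map (rename (Sum.inl : Fin n → Fin n ⊕ Fin n)) I
      ⊔ Ideal.map (rename (Sum.inr : Fin n → Fin n ⊕ Fin n)) J) :
    W (cf ord hadd hzero I J b c) g = 0 := by
  obtain ⟨p, hp, q, hq, rfl⟩ := Submodule.mem_sup.mp hg
  rw [map_add, W_vanish_left ord hadd hzero I J b c hp,
    W_vanish_right ord hadd hzero I J b c hq, add_zero]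

end Vanish

section Mem

lemma mem_sup_of_supp (M N : Ideal (MvPolynomial (Fin n) K))
    (g : MvPolynomial (Fin n ⊕ Fin n) K)
    (hg : ∀ d ∈ g.support, (monomial (pp1 d) (1:K) ∈ M) ∨ (monomial (pp2 d) (1:K) ∈ N)) :
    g ∈ Ideal.map (rename (Sum.inl : Fin n → Fin n ⊕ Fin n)) M
      ⊔ Ideal.map (rename (Sum.inr : Fin n → Fin n ⊕ Fin n)) N := by
  classical
  rw [g.as_sum]
  apply Ideal.sum_mem
  intro d hd
  rcases hg d hd with h | h
  · apply Submodule.mem_sup_left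
    have heq : (monomial d (coeff d g) : MvPolynomial (Fin n ⊕ Fin n) K) =
        monomial (Finsupp.mapDomain Sum.inr (pp2 d)) (coeff d g)
          * rename Sum.inl (monomial (pp1 d) (1:K)) := by
      rw [rename_monomial, monomial_mul, mul_one, add_comm, pp_recomb]
    rw [heq]
    exact Ideal.mul_mem_left _ _ (Ideal.mem_map_of_mem _ h)
  · apply Submodule.mem_sup_right
    have heq : (monomial d (coeff d g) : MvPolynomial (Fin n ⊕ Fin n) K) =
        monomial (Finsupp.mapDomain Sum.inl (pp1 d)) (coeff d g)
          * rename Sum.inr (monomial (pp2 d) (1:K)) := by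
      rw [rename_monomial, monomial_mul, mul_one, pp_recomb]
    rw [heq]
    exact Ideal.mul_mem_left _ _ (Ideal.mem_map_of_mem _ h)

end Mem

section Join

lemma join_mem_iff (I J : Ideal (MvPolynomial (Fin n) K)) (f : MvPolynomial (Fin n) K) :
    f ∈ joinIdeal I J ↔
      (aeval (ss K n) f : MvPolynomial (Fin n ⊕ Fin n) K) ∈
        Ideal.map (rename (Sum.inl : Fin n → Fin n ⊕ Fin n)) I
          ⊔ Ideal.map (rename (Sum.inr : Fin n → Fin n ⊕ Fin n)) J := by
  classical
  set S₁ := Ideal.map (rename (fun i : Fin n =>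
    (Sum.inr (Sum.inl i) : Fin n ⊕ (Fin n ⊕ Fin n)))) I with hS₁
  set S₂ := Ideal.map (rename (fun i : Fin n =>
    (Sum.inr (Sum.inr i) : Fin n ⊕ (Fin n ⊕ Fin n)))) J with hS₂
  set S₃ := Ideal.span {p : MvPolynomial (Fin n ⊕ (Fin n ⊕ Fin n)) K | ∃ i : Fin n,
    p = X (Sum.inr (Sum.inl i)) + X (Sum.inr (Sum.inr i)) - X (Sum.inl i)} with hS₃
  have hmem : f ∈ joinIdeal I J ↔ rename (Sum.inl : Fin n → Fin n ⊕ (Fin n ⊕ Fin n)) f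
      ∈ S₁ ⊔ S₂ ⊔ S₃ := Iff.rfl
  rw [hmem]
  set π : MvPolynomial (Fin n ⊕ (Fin n ⊕ Fin n)) K →ₐ[K] MvPolynomial (Fin n ⊕ Fin n) K :=
    aeval (Sum.elim (fun i => (X (Sum.inl i) + X (Sum.inr i) : MvPolynomial (Fin n ⊕ Fin n) K))
      (fun w => X w)) with hπ
  constructor
  · intro hf
    have h2 : π (rename (Sum.inl : Fin n → Fin n ⊕ (Fin n ⊕ Fin n)) f)
        ∈ Ideal.map π (S₁ ⊔ S₂ ⊔ S₃) := Ideal.mem_map_of_mem _ hf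
    have h3 : π (rename (Sum.inl : Fin n → Fin n ⊕ (Fin n ⊕ Fin n)) f)
        = aeval (ss K n) f := by
      rw [hπ, aeval_rename]
      rfl
    have h4 : Ideal.map π (S₁ ⊔ S₂ ⊔ S₃)
        ≤ Ideal.map (rename (Sum.inl : Fin n → Fin n ⊕ Fin n)) I
          ⊔ Ideal.map (rename (Sum.inr : Fin n → Fin n ⊕ Fin n)) J := by
      rw [Ideal.map_sup, Ideal.map_sup]
      apply sup_le
      apply sup_le
      · -- S₁
        refine le_trans ?_ (le_sup_left :
          Ideal.map (rename (Sum.inl : Fin n → Fin n ⊕ Fin n)) I ≤ _)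
        rw [hS₁, Ideal.map_le_iff_le_comap, Ideal.map_le_iff_le_comap]
        intro h hh
        show π (rename (fun i : Fin n => (Sum.inr (Sum.inl i) : Fin n ⊕ (Fin n ⊕ Fin n))) h)
          ∈ Ideal.map (rename (Sum.inl : Fin n → Fin n ⊕ Fin n)) I
        have : π (rename (fun i : Fin n => (Sum.inr (Sum.inl i) : Fin n ⊕ (Fin n ⊕ Fin n))) h)
            = rename (Sum.inl : Fin n → Fin n ⊕ Fin n) h := by
          rw [hπ, aeval_rename, rename_eq_aeval]
          rfl
        rw [this]
        exact Ideal.mem_map_of_mem _ hh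
      · -- S₂
        refine le_trans ?_ (le_sup_right :
          Ideal.map (rename (Sum.inr : Fin n → Fin n ⊕ Fin n)) J ≤ _)
        rw [hS₂, Ideal.map_le_iff_le_comap, Ideal.map_le_iff_le_comap]
        intro h hh
        show π (rename (fun i : Fin n => (Sum.inr (Sum.inr i) : Fin n ⊕ (Fin n ⊕ Fin n))) h)
          ∈ Ideal.map (rename (Sum.inr : Fin n → Fin n ⊕ Fin n)) J
        have : π (rename (fun i : Fin n => (Sum.inr (Sum.inr i) : Fin n ⊕ (Fin n ⊕ Fin n))) h)
            = rename (Sum.inr : Fin n → Fin n ⊕ Fin n) h := by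
          rw [hπ, aeval_rename, rename_eq_aeval]
          rfl
        rw [this]
        exact Ideal.mem_map_of_mem _ hh
      · -- S₃
        rw [hS₃, Ideal.map_span, Ideal.span_le]
        rintro p ⟨q, ⟨i, rfl⟩, rfl⟩
        have : π (X (Sum.inr (Sum.inl i)) + X (Sum.inr (Sum.inr i)) - X (Sum.inl i)) = 0 := by
          rw [map_sub, map_add, hπ, aeval_X, aeval_X, aeval_X]
          simp
        rw [SetLike.mem_coe, this]
        exact Submodule.zero_mem _
    exact h3 ▸ h4 h2
  · intro hf
    have key : rename (Sum.inl : Fin n → Fin n ⊕ (Fin n ⊕ Fin n)) f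
        - rename (Sum.inr : Fin n ⊕ Fin n → Fin n ⊕ (Fin n ⊕ Fin n)) (aeval (ss K n) f)
        ∈ S₃ := by
      have hQ : ((Ideal.Quotient.mkₐ K S₃).comp
          (rename (Sum.inl : Fin n → Fin n ⊕ (Fin n ⊕ Fin n))))
          = ((Ideal.Quotient.mkₐ K S₃).comp
            ((rename (Sum.inr : Fin n ⊕ Fin n → Fin n ⊕ (Fin n ⊕ Fin n))).comp
              (aeval (ss K n) : MvPolynomial (Fin n) K →ₐ[K]
                MvPolynomial (Fin n ⊕ Fin n) K))) := by
        apply algHom_ext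
        intro i
        simp only [AlgHom.comp_apply, rename_X, Ideal.Quotient.mkₐ_eq_mk, aeval_X]
        unfold ss
        rw [map_add, rename_X, rename_X, Ideal.Quotient.mk_eq_mk_iff_sub_mem]
        have heq : (X (Sum.inl i) : MvPolynomial (Fin n ⊕ (Fin n ⊕ Fin n)) K)
            - (X (Sum.inr (Sum.inl i)) + X (Sum.inr (Sum.inr i)))
            = -(X (Sum.inr (Sum.inl i)) + X (Sum.inr (Sum.inr i)) - X (Sum.inl i)) := by ring
        rw [heq]
        exact Submodule.neg_mem _ (Ideal.subset_span ⟨i, rfl⟩)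
      have h6 := AlgHom.congr_fun hQ f
      simp only [AlgHom.comp_apply, Ideal.Quotient.mkₐ_eq_mk] at h6
      rw [Ideal.Quotient.mk_eq_mk_iff_sub_mem] at h6
      exact h6
    have h2 : rename (Sum.inr : Fin n ⊕ Fin n → Fin n ⊕ (Fin n ⊕ Fin n)) (aeval (ss K n) f)
        ∈ S₁ ⊔ S₂ := by
      have h5 : Ideal.map (rename (Sum.inr : Fin n ⊕ Fin n → Fin n ⊕ (Fin n ⊕ Fin n)))
          (Ideal.map (rename (Sum.inl : Fin n → Fin n ⊕ Fin n)) I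
            ⊔ Ideal.map (rename (Sum.inr : Fin n → Fin n ⊕ Fin n)) J) ≤ S₁ ⊔ S₂ := by
        rw [Ideal.map_sup]
        apply sup_le
        · refine le_trans ?_ le_sup_left
          rw [hS₁, Ideal.map_le_iff_le_comap, Ideal.map_le_iff_le_comap]
          intro h hh
          show rename (Sum.inr : Fin n ⊕ Fin n → Fin n ⊕ (Fin n ⊕ Fin n))
              (rename (Sum.inl : Fin n → Fin n ⊕ Fin n) h)
            ∈ Ideal.map (rename (fun i : Fin n =>
              (Sum.inr (Sum.inl i) : Fin n ⊕ (Fin n ⊕ Fin n)))) I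
          rw [rename_rename]
          exact Ideal.mem_map_of_mem _ hh
        · refine le_trans ?_ le_sup_right
          rw [hS₂, Ideal.map_le_iff_le_comap, Ideal.map_le_iff_le_comap]
          intro h hh
          show rename (Sum.inr : Fin n ⊕ Fin n → Fin n ⊕ (Fin n ⊕ Fin n))
              (rename (Sum.inr : Fin n → Fin n ⊕ Fin n) h)
            ∈ Ideal.map (rename (fun i : Fin n =>
              (Sum.inr (Sum.inr i) : Fin n ⊕ (Fin n ⊕ Fin n)))) J
          rw [rename_rename]
          exact Ideal.mem_map_of_mem _ hh
      exact h5 (Ideal.mem_map_of_mem _ hf)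
    have h7 : rename (Sum.inl : Fin n → Fin n ⊕ (Fin n ⊕ Fin n)) f
        = (rename (Sum.inl : Fin n → Fin n ⊕ (Fin n ⊕ Fin n)) f
            - rename (Sum.inr : Fin n ⊕ Fin n → Fin n ⊕ (Fin n ⊕ Fin n)) (aeval (ss K n) f))
          + rename (Sum.inr : Fin n ⊕ Fin n → Fin n ⊕ (Fin n ⊕ Fin n)) (aeval (ss K n) f) := by
      ring
    rw [h7]
    exact Submodule.add_mem _ (Submodule.mem_sup_right key) (Submodule.mem_sup_left h2)

lemma joinIdeal_mono {I I' J J' : Ideal (MvPolynomial (Fin n) K)}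
    (h1 : I ≤ I') (h2 : J ≤ J') : joinIdeal I J ≤ joinIdeal I' J' :=
  Ideal.comap_mono (sup_le_sup (sup_le_sup (Ideal.map_mono h1) (Ideal.map_mono h2)) le_rfl)

end Join

section Main

variable (ord : LinearOrder (Fin n →₀ ℕ))
  (hadd : ∀ a b c : Fin n →₀ ℕ, ord.le a b → ord.le (a + c) (b + c))
  (hzero : ∀ a : Fin n →₀ ℕ, ord.le 0 a)

include hadd hzero

lemma ole_add_both {b c p1 p2 : Fin n →₀ ℕ} (h1 : ord.le b p1) (h2 : ord.le c p2) :
    ord.le (b + c) (p1 + p2) := by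
  have t1 := hadd b p1 c h1
  have t2 := hadd c p2 p1 h2
  rw [add_comm c p1, add_comm p2 p1] at t2
  exact ole_trans ord t1 t2

lemma initial_join (I J : Ideal (MvPolynomial (Fin n) K)) :
    initialIdeal ord (joinIdeal I J)
      ≤ joinIdeal (initialIdeal ord I) (initialIdeal ord J) := by
  classical
  rw [initialIdeal_eq, Ideal.span_le]
  rintro p ⟨μ, ⟨f, hfJ, hf, rfl⟩, rfl⟩
  set a := leadMonomial ord f hf with ha
  rw [SetLike.mem_coe, join_mem_iff]
  apply mem_sup_of_supp
  intro d hd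
  have hcol : pp1 d + pp2 d = a := supp_aeval_monomial a 1 d hd
  by_contra hcon
  push_neg at hcon
  obtain ⟨hbI, hcJ⟩ := hcon
  have hstdb : Std ord I (pp1 d) := hbI
  have hstdc : Std ord J (pp2 d) := hcJ
  set b := pp1 d with hb
  set c := pp2 d with hc
  set g : MvPolynomial (Fin n ⊕ Fin n) K := aeval (ss K n) f with hg
  have hgmem : g ∈ Ideal.map (rename (Sum.inl : Fin n → Fin n ⊕ Fin n)) I
      ⊔ Ideal.map (rename (Sum.inr : Fin n → Fin n ⊕ Fin n)) J :=
    (join_mem_iff I J f).mp hfJ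
  have hW0 : W (cf ord hadd hzero I J b c) g = 0 :=
    W_vanish_sup ord hadd hzero I J b c hgmem
  -- the coefficient of `d` in `g` is nonzero
  have hcoeffd : coeff d g = coeff a f * coeff d
      (aeval (ss K n) (monomial a (1:K)) : MvPolynomial (Fin n ⊕ Fin n) K) :=
    coeff_aeval_eq f a d hcol (ha ▸ lead_mem ord f hf)
  have hcdne : coeff d g ≠ 0 := by
    rw [hcoeffd]
    exact mul_ne_zero (coeff_lead_ne ord f hf) (MvPolynomial.mem_support_iff.mp hd)
  have hdmem : d ∈ g.support := MvPolynomial.mem_support_iff.mpr hcdne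
  -- compute W g
  have hWeq : W (cf ord hadd hzero I J b c) g = coeff d g * cf ord hadd hzero I J b c d := by
    show (∑ e ∈ g.support, coeff e g * cf ord hadd hzero I J b c e) = _
    apply Finset.sum_eq_single_of_mem d hdmem
    intro e he hne
    by_contra hterm
    obtain ⟨hcoefe, hcfe⟩ := mul_ne_zero_iff.mp hterm
    obtain ⟨hαne, hβne⟩ := mul_ne_zero_iff.mp hcfe
    have hble : ord.le b (pp1 e) := by
      by_contra hno
      exact hαne (alphaH_bound ord hadd hzero hno)
    have hcle : ord.le c (pp2 e) := by
      by_contra hno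
      exact hβne (alphaH_bound ord hadd hzero hno)
    have hcole : pp1 e + pp2 e ∈ f.support :=
      collapse_mem_of_supp f e (MvPolynomial.mem_support_iff.mpr hcoefe)
    have h1 : ord.le (pp1 e + pp2 e) a := ha ▸ le_lead ord hf hcole
    have h2 : ord.le (b + c) (pp1 e + pp2 e) := ole_add_both ord hadd hzero hble hcle
    rw [hcol] at h2
    have heq : pp1 e + pp2 e = b + c := by
      rw [hcol]
      exact ord.le_antisymm _ _ h1 h2
    have hp2 : pp2 e = c := by
      have t1 : ord.le (b + pp2 e) (pp1 e + pp2 e) := hadd b (pp1 e) (pp2 e) hble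
      rw [heq] at t1
      have t2 : ord.le (pp2 e) c := by
        apply ole_cancel ord hadd (c := b)
        rw [add_comm (pp2 e) b, add_comm c b]
        exact t1
      exact ord.le_antisymm _ _ t2 hcle
    have hp1 : pp1 e = b := by
      have : pp1 e + pp2 e = b + pp2 e := by rw [heq, hp2]
      exact add_right_cancel this
    exact hne (pp_inj hp1 hp2)
  rw [hWeq] at hW0
  have hcf1 : cf ord hadd hzero I J b c d = 1 := by
    unfold cf
    rw [← hb, ← hc, alphaH_self ord hadd hzero hstdb, alphaH_self ord hadd hzero hstdc, mul_one]
  rw [hcf1, mul_one] at hW0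
  exact hcdne hW0

end Main

end S13

/-- for any ideals `I_1, ..., I_r` and any term order,
`in(I_1 * ⋯ * I_r) ⊆ in(I_1) * ⋯ * in(I_r)`. -/
theorem stmt_13 (K : Type*) [Field K] (n r : ℕ)
    (ord : LinearOrder (Fin n →₀ ℕ))
    (hadd : ∀ a b c : Fin n →₀ ℕ, ord.le a b → ord.le (a + c) (b + c))
    (hzero : ∀ a : Fin n →₀ ℕ, ord.le 0 a)
    (I : Fin (r + 1) → Ideal (MvPolynomial (Fin n) K)) :
    initialIdeal ord (joinSeq r I) ≤ joinSeq r (fun t => initialIdeal ord (I t)) := by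
  induction r with
  | zero => exact le_rfl
  | succ r IH =>
    show initialIdeal ord (joinIdeal (joinSeq r fun t => I t.castSucc) (I (Fin.last (r + 1))))
      ≤ joinIdeal (joinSeq r fun t => initialIdeal ord (I t.castSucc))
        (initialIdeal ord (I (Fin.last (r + 1))))
    refine le_trans (S13.initial_join ord hadd hzero _ _) ?_
    exact S13.joinIdeal_mono (IH (fun t => I t.castSucc)) le_rfl
end

section
/- Let K have characteristic zero and I a homogeneous ideal in K[x_1,...,x_n] with indeg(I) = d. If the r-th secant ideal I^{{r}} is nonzero, then indeg(I^{{r}}) ≥ rd - r + 1. -/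
open MvPolynomial

/-- An ideal is homogeneous if it contains all homogeneous components of its elements. -/
def IsHomogeneousIdeal {K : Type*} [Field K] {n : ℕ} (I : Ideal (MvPolynomial (Fin n) K)) :
    Prop :=
  ∀ f ∈ I, ∀ d : ℕ, homogeneousComponent d f ∈ I

/-- `indeg I`: the smallest degree of a nonzero homogeneous element of `I`. -/
noncomputable def indeg {K : Type*} [Field K] {n : ℕ} (I : Ideal (MvPolynomial (Fin n) K)) :
    ℕ :=
  sInf {d : ℕ | ∃ f ∈ I, f ≠ 0 ∧ MvPolynomial.IsHomogeneous f d}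

lemma aeval_mul_of_isHomogeneous {K : Type*} [CommSemiring K] {n : ℕ} {S : Type*} [CommSemiring S]
    [Algebra K S] (c : S) (g : Fin n → S) {q : MvPolynomial (Fin n) K} {e : ℕ}
    (hq : q.IsHomogeneous e) :
    aeval (fun i => c * g i) q = c ^ e * aeval g q := by
  conv_lhs => rw [q.as_sum, map_sum]
  conv_rhs => rw [q.as_sum, map_sum, Finset.mul_sum]
  apply Finset.sum_congr rfl
  intro m hm
  rw [aeval_monomial, aeval_monomial]
  have hdeg : (∑ i ∈ m.support, m i) = e := by
    have := hq (mem_support_iff.mp hm)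
    simpa [Finsupp.weight_apply, Finsupp.sum, Pi.one_apply, smul_eq_mul] using this
  have : (m.prod fun i k => (c * g i) ^ k) = c ^ e * m.prod fun i k => g i ^ k := by
    simp_rw [mul_pow]
    rw [Finsupp.prod, Finset.prod_mul_distrib, Finset.prod_pow_eq_pow_sum, hdeg, ← Finsupp.prod]
  rw [this]; ring

lemma aeval_scale_mem {K : Type*} [Field K] {n : ℕ} {I : Ideal (MvPolynomial (Fin n) K)} {a : ℕ}
    (hIl : ∀ p ∈ I, ∀ k < a, homogeneousComponent k p = 0)
    {S : Type*} [CommRing S] [Algebra K S] (c : S) (g0 : Fin n → S)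
    {p : MvPolynomial (Fin n) K} (hp : p ∈ I) :
    aeval (fun i => c * g0 i) p ∈ Ideal.span {c ^ a} := by
  have hrp := p.sum_homogeneousComponent
  rw [← hrp, map_sum]
  apply Ideal.sum_mem
  intro e _
  rw [aeval_mul_of_isHomogeneous c g0 (homogeneousComponent_isHomogeneous e p)]
  by_cases h : e < a
  · rw [hIl p hp e h, map_zero, mul_zero]; exact zero_mem _
  · push_neg at h
    exact Ideal.mem_span_singleton.2 (Dvd.dvd.mul_right (pow_dvd_pow c h) _)

-- the embedding R → Polynomial (Polynomial R)

lemma aeval_CC {K : Type*} [Field K] {n : ℕ} (q : MvPolynomial (Fin n) K) :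
    aeval (fun i => (Polynomial.C (Polynomial.C (X i)) :
      Polynomial (Polynomial (MvPolynomial (Fin n) K)))) q
      = Polynomial.C (Polynomial.C q) := by
  induction q using MvPolynomial.induction_on with
  | C a => simp [algebraMap_eq]
  | add p q hp hq => simp [hp, hq]
  | mul_X p i hp => simp [hp]

lemma coeff_term {R : Type*} [CommRing R] (h : R) (e' j k : ℕ) :
    ((((Polynomial.C Polynomial.X + Polynomial.X) ^ e' * Polynomial.C (Polynomial.C h) :
      Polynomial (Polynomial R)).coeff j).coeff k)
    = if j + k = e' then (e'.choose j : R) * h else 0 := by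
  rw [add_comm (Polynomial.C Polynomial.X) Polynomial.X, Polynomial.coeff_mul_C,
    Polynomial.coeff_X_add_C_pow]
  rw [mul_assoc, Polynomial.coeff_X_pow_mul']
  by_cases hj : j ≤ e'
  · by_cases hk : e' - j ≤ k
    · rw [if_pos hk]
      have hc : ((e'.choose j : Polynomial R) * Polynomial.C h)
          = Polynomial.C ((e'.choose j : R) * h) := by
        rw [← Polynomial.C_eq_natCast, ← Polynomial.C_mul]
      rw [hc, Polynomial.coeff_C]
      by_cases he : j + k = e'
      · rw [if_pos (by omega), if_pos he]
      · rw [if_neg (by omega), if_neg he]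
    · rw [if_neg hk, if_neg (by omega)]
  · rw [Nat.choose_eq_zero_of_lt (by omega)]
    push_cast
    rw [zero_mul, Polynomial.coeff_zero, if_neg (show ¬ j + k = e' by omega)]
    simp

lemma joinIdeal_low {K : Type*} [Field K] [CharZero K] {n : ℕ}
    {I J : Ideal (MvPolynomial (Fin n) K)} {a b : ℕ} (ha : 1 ≤ a) (hb : 1 ≤ b)
    (hIl : ∀ p ∈ I, ∀ k < a, homogeneousComponent k p = 0)
    (hJl : ∀ p ∈ J, ∀ k < b, homogeneousComponent k p = 0) :
    ∀ f ∈ joinIdeal I J, ∀ e, e + 1 < a + b → homogeneousComponent e f = 0 := by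
  intro f hf e he
  classical
  by_cases hN : f.totalDegree < e
  · exact homogeneousComponent_eq_zero _ _ hN
  push_neg at hN
  set s : Polynomial (Polynomial (MvPolynomial (Fin n) K)) := Polynomial.C Polynomial.X with hs
  set t : Polynomial (Polynomial (MvPolynomial (Fin n) K)) := Polynomial.X with ht
  set cc : Fin n → Polynomial (Polynomial (MvPolynomial (Fin n) K)) :=
    fun i => Polynomial.C (Polynomial.C (X i)) with hcc
  set g : (Fin n ⊕ (Fin n ⊕ Fin n)) → Polynomial (Polynomial (MvPolynomial (Fin n) K)) :=
    Sum.elim (fun i => (s + t) * cc i)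
      (Sum.elim (fun i => s * cc i) (fun i => t * cc i)) with hg
  -- membership
  have hmem : aeval g (rename Sum.inl f) ∈ Ideal.span {s ^ a} ⊔ Ideal.span {t ^ b} := by
    rw [joinIdeal, Ideal.mem_comap] at hf
    have h2 : Ideal.map (aeval g : MvPolynomial (Fin n ⊕ (Fin n ⊕ Fin n)) K →ₐ[K] _)
        (Ideal.map (rename (fun i : Fin n => (Sum.inr (Sum.inl i) : Fin n ⊕ (Fin n ⊕ Fin n)))) I ⊔
         Ideal.map (rename (fun i : Fin n => (Sum.inr (Sum.inr i) : Fin n ⊕ (Fin n ⊕ Fin n)))) J ⊔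
         Ideal.span {p : MvPolynomial (Fin n ⊕ (Fin n ⊕ Fin n)) K | ∃ i : Fin n,
           p = X (Sum.inr (Sum.inl i)) + X (Sum.inr (Sum.inr i)) - X (Sum.inl i)})
        ≤ Ideal.span {s ^ a} ⊔ Ideal.span {t ^ b} := by
      rw [Ideal.map_sup, Ideal.map_sup]
      apply sup_le (sup_le ?_ ?_) ?_
      · refine le_trans ?_ le_sup_left
        rw [Ideal.map_le_iff_le_comap, Ideal.map_le_iff_le_comap]
        intro p hp
        rw [Ideal.mem_comap, Ideal.mem_comap, aeval_rename]
        exact aeval_scale_mem hIl s cc hp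
      · refine le_trans ?_ le_sup_right
        rw [Ideal.map_le_iff_le_comap, Ideal.map_le_iff_le_comap]
        intro p hp
        rw [Ideal.mem_comap, Ideal.mem_comap, aeval_rename]
        exact aeval_scale_mem hJl t cc hp
      · rw [Ideal.map_span, Ideal.span_le]
        rintro q ⟨q', ⟨i, rfl⟩, rfl⟩
        have : (aeval g : MvPolynomial (Fin n ⊕ (Fin n ⊕ Fin n)) K →ₐ[K] _)
            (X (Sum.inr (Sum.inl i)) + X (Sum.inr (Sum.inr i)) - X (Sum.inl i)) = 0 := by
          rw [map_sub, map_add, aeval_X, aeval_X, aeval_X]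
          show s * cc i + t * cc i - (s + t) * cc i = 0
          ring
        rw [this]
        exact zero_mem _
    exact h2 (Ideal.mem_map_of_mem _ hf)
  obtain ⟨q1, hq1, q2, hq2, hq⟩ := Submodule.mem_sup.mp hmem
  -- compute the image
  have himg : aeval g (rename Sum.inl f) = ∑ e' ∈ Finset.range (f.totalDegree + 1),
      (s + t) ^ e' * Polynomial.C (Polynomial.C (homogeneousComponent e' f)) := by
    rw [aeval_rename]
    have hfd := f.sum_homogeneousComponent
    conv_lhs => rw [← hfd]
    rw [map_sum]
    apply Finset.sum_congr rfl
    intro e' _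
    have hcomp : g ∘ (Sum.inl : Fin n → Fin n ⊕ (Fin n ⊕ Fin n))
        = fun i => (s + t) * cc i := rfl
    rw [hcomp, aeval_mul_of_isHomogeneous _ _ (homogeneousComponent_isHomogeneous e' f),
      aeval_CC]
  -- choose the bidegree to extract
  set k : ℕ := min e (a - 1) with hk
  set j : ℕ := e - k with hj
  have hkj : j + k = e := by omega
  have hka : k < a := by omega
  have hjb : j < b := by omega
  -- extract coefficients
  have hext : ((aeval g (rename Sum.inl f)).coeff j).coeff k
      = (e.choose j : MvPolynomial (Fin n) K) * homogeneousComponent e f := by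
    rw [himg, Polynomial.finset_sum_coeff, Polynomial.finset_sum_coeff,
      Finset.sum_congr rfl (fun e' _ => coeff_term (homogeneousComponent e' f) e' j k),
      Finset.sum_ite_eq, if_pos (Finset.mem_range.mpr (by omega)), hkj]
  have hz1 : ((q1 : Polynomial (Polynomial (MvPolynomial (Fin n) K))).coeff j).coeff k = 0 := by
    obtain ⟨w, hw⟩ := Ideal.mem_span_singleton'.mp hq1
    have hsa : s ^ a = Polynomial.C (Polynomial.X ^ a) := by rw [hs, map_pow]
    rw [← hw, hsa, Polynomial.coeff_mul_C, Polynomial.coeff_mul_X_pow', if_neg (by omega)]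
  have hz2 : ((q2 : Polynomial (Polynomial (MvPolynomial (Fin n) K))).coeff j).coeff k = 0 := by
    obtain ⟨w, hw⟩ := Ideal.mem_span_singleton'.mp hq2
    rw [← hw, ht, Polynomial.coeff_mul_X_pow', if_neg (by omega), Polynomial.coeff_zero]
  have : (e.choose j : MvPolynomial (Fin n) K) * homogeneousComponent e f = 0 := by
    rw [← hext, ← hq, Polynomial.coeff_add, Polynomial.coeff_add, hz1, hz2, add_zero]
  have hch : (e.choose j : MvPolynomial (Fin n) K) ≠ 0 := by
    have : (0:ℕ) < e.choose j := Nat.choose_pos (by omega)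
    exact_mod_cast Nat.cast_ne_zero.mpr this.ne'
  exact (mul_eq_zero.mp this).resolve_left hch

attribute [local instance] MvPolynomial.gradedAlgebra

lemma decompose_apply_eq {K : Type*} [Field K] {σ : Type*} (f : MvPolynomial σ K) (k : ℕ) :
    (DirectSum.decompose (homogeneousSubmodule σ K) f k : MvPolynomial σ K)
      = homogeneousComponent k f :=
  MvPolynomial.decomposition.decompose'_apply f k

lemma rename_homogeneousComponent {K : Type*} [Field K] {σ τ : Type*} (g : σ → τ)
    (p : MvPolynomial σ K) (k : ℕ) :
    homogeneousComponent k (rename g p) = rename g (homogeneousComponent k p) := by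
  conv_lhs => rw [← p.sum_homogeneousComponent]
  rw [map_sum, map_sum]
  have h1 : ∀ e, homogeneousComponent k (rename g (homogeneousComponent e p))
      = if k = e then rename g (homogeneousComponent e p) else 0 := fun e =>
    homogeneousComponent_of_mem ((homogeneousComponent_isHomogeneous e p).rename_isHomogeneous)
  rw [Finset.sum_congr rfl (fun e _ => h1 e), Finset.sum_ite_eq _ k
    (fun e => rename g (homogeneousComponent e p))]
  split
  · rfl
  · next h =>
    rw [Finset.mem_range, not_lt] at h
    rw [homogeneousComponent_eq_zero _ _ (lt_of_lt_of_le (Nat.lt_succ_self _) h), map_zero]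

lemma eq_span_homog {K : Type*} [Field K] {n : ℕ} {I : Ideal (MvPolynomial (Fin n) K)}
    (hI : IsHomogeneousIdeal I) :
    I = Ideal.span {p | p ∈ I ∧ ∃ e, p.IsHomogeneous e} := by
  apply le_antisymm
  · intro p hp
    have hps := p.sum_homogeneousComponent
    rw [← hps]
    exact Ideal.sum_mem _ fun e _ =>
      Ideal.subset_span ⟨hI p hp e, e, homogeneousComponent_isHomogeneous e p⟩
  · rw [Ideal.span_le]
    rintro p ⟨hp, -⟩
    exact hp

lemma joinIdeal_isHomogeneousIdeal {K : Type*} [Field K] {n : ℕ}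
    {I J : Ideal (MvPolynomial (Fin n) K)}
    (hI : IsHomogeneousIdeal I) (hJ : IsHomogeneousIdeal J) :
    IsHomogeneousIdeal (joinIdeal I J) := by
  intro f hf k
  rw [joinIdeal, Ideal.mem_comap] at hf ⊢
  rw [← _root_.rename_homogeneousComponent]
  have hM : Ideal.IsHomogeneous (homogeneousSubmodule (Fin n ⊕ (Fin n ⊕ Fin n)) K)
      (Ideal.map (rename (fun i : Fin n => (Sum.inr (Sum.inl i) : Fin n ⊕ (Fin n ⊕ Fin n)))) I ⊔
       Ideal.map (rename (fun i : Fin n => (Sum.inr (Sum.inr i) : Fin n ⊕ (Fin n ⊕ Fin n)))) J ⊔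
       Ideal.span {p : MvPolynomial (Fin n ⊕ (Fin n ⊕ Fin n)) K | ∃ i : Fin n,
         p = X (Sum.inr (Sum.inl i)) + X (Sum.inr (Sum.inr i)) - X (Sum.inl i)}) := by
    apply Ideal.IsHomogeneous.sup
    apply Ideal.IsHomogeneous.sup
    · rw [eq_span_homog hI, Ideal.map_span]
      apply Ideal.homogeneous_span
      rintro x ⟨p, ⟨-, e, hpe⟩, rfl⟩
      exact ⟨e, (mem_homogeneousSubmodule _ _).2 hpe.rename_isHomogeneous⟩
    · rw [eq_span_homog hJ, Ideal.map_span]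
      apply Ideal.homogeneous_span
      rintro x ⟨p, ⟨-, e, hpe⟩, rfl⟩
      exact ⟨e, (mem_homogeneousSubmodule _ _).2 hpe.rename_isHomogeneous⟩
    · apply Ideal.homogeneous_span
      rintro x ⟨i, rfl⟩
      refine ⟨1, (mem_homogeneousSubmodule _ _).2 ?_⟩
      exact ((isHomogeneous_X _ _).add (isHomogeneous_X _ _)).sub (isHomogeneous_X _ _)
  have hk := hM k hf
  rwa [decompose_apply_eq] at hk

lemma span_homog_isHomogeneousIdeal {K : Type*} [Field K] {n : ℕ}
    (G : Set (MvPolynomial (Fin n) K)) (hG : ∀ g ∈ G, ∃ e, g.IsHomogeneous e) :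
    IsHomogeneousIdeal (Ideal.span G) := by
  intro f hf k
  have h := Ideal.homogeneous_span (homogeneousSubmodule (Fin n) K) G
    (fun x hx => (hG x hx).imp fun e he => (mem_homogeneousSubmodule _ _).2 he) k hf
  rwa [decompose_apply_eq] at h

lemma secantIdeal_isHomogeneousIdeal {K : Type*} [Field K] {n : ℕ}
    {I : Ideal (MvPolynomial (Fin n) K)} (hI : IsHomogeneousIdeal I) :
    ∀ r, IsHomogeneousIdeal (secantIdeal I r)
  | 0 => span_homog_isHomogeneousIdeal _ (by rintro g ⟨i, rfl⟩; exact ⟨1, isHomogeneous_X _ _⟩)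
  | 1 => hI
  | (r + 2) => joinIdeal_isHomogeneousIdeal (secantIdeal_isHomogeneousIdeal hI (r + 1)) hI

lemma secant_low {K : Type*} [Field K] [CharZero K] {n : ℕ}
    {I : Ideal (MvPolynomial (Fin n) K)} {d : ℕ} (hd1 : 1 ≤ d)
    (hIl : ∀ p ∈ I, ∀ k < d, homogeneousComponent k p = 0) :
    ∀ r, ∀ p ∈ secantIdeal I (r + 1), ∀ k, k < (r + 1) * (d - 1) + 1 →
      homogeneousComponent k p = 0 := by
  intro r
  induction r with
  | zero =>
    intro p hp k hk
    exact hIl p hp k (by omega)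
  | succ r ih =>
    intro p hp k hk
    have key := joinIdeal_low (I := secantIdeal I (r + 1)) (J := I)
      (a := (r + 1) * (d - 1) + 1) (b := d) (by omega) hd1 ih hIl
    exact key p hp k (by
      have h1 : (r + 1 + 1) * (d - 1) + 1 + 1 = ((r + 1) * (d - 1) + 1) + d := by
        obtain ⟨d', rfl⟩ := Nat.exists_eq_add_of_le hd1
        simp
        ring
      omega)

/-- in characteristic zero, for a homogeneous ideal `I` with `indeg I = d`,
if the `r`-th secant `I^{r}` is nonzero then `indeg(I^{r}) ≥ rd - r + 1`. -/
theorem stmt_15 (K : Type*) [Field K] [CharZero K] (n : ℕ)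
    (I : Ideal (MvPolynomial (Fin n) K)) (hI : IsHomogeneousIdeal I)
    (d r : ℕ) (hr : 1 ≤ r) (hd : indeg I = d)
    (hne : secantIdeal I r ≠ ⊥) :
    (r : ℤ) * d - r + 1 ≤ (indeg (secantIdeal I r) : ℤ) := by
  rcases Nat.eq_zero_or_pos d with h0 | hpos
  · subst h0
    have h1 : (0:ℤ) ≤ (indeg (secantIdeal I r) : ℤ) := Int.ofNat_nonneg _
    have h2 : (1:ℤ) ≤ (r:ℤ) := by exact_mod_cast hr
    push_cast
    linarith
  · -- low-degree components of I vanish below d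
    have hIl : ∀ p ∈ I, ∀ k < d, homogeneousComponent k p = 0 := by
      intro p hp k hk
      by_contra hne0
      have hkmem : k ∈ {d' : ℕ | ∃ f ∈ I, f ≠ 0 ∧ MvPolynomial.IsHomogeneous f d'} :=
        ⟨homogeneousComponent k p, hI p hp k, hne0, homogeneousComponent_isHomogeneous k p⟩
      have hle := Nat.sInf_le hkmem
      rw [indeg] at hd
      omega
    obtain ⟨r', rfl⟩ := Nat.exists_eq_add_of_le hr
    set r := 1 + r' with hrdef
    have hlow := secant_low hpos hIl r'
    have hr'r : r' + 1 = r := by omega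
    rw [hr'r] at hlow
    have hhom := secantIdeal_isHomogeneousIdeal hI r
    obtain ⟨p, hp, hpne⟩ := Submodule.exists_mem_ne_zero_of_ne_bot hne
    have hexk : ∃ k, homogeneousComponent k p ≠ 0 := by
      by_contra hall
      push_neg at hall
      apply hpne
      have hps := p.sum_homogeneousComponent
      rw [← hps]
      exact Finset.sum_eq_zero fun e _ => hall e
    obtain ⟨k, hk⟩ := hexk
    have hSne : {d' : ℕ | ∃ f ∈ secantIdeal I r, f ≠ 0 ∧ MvPolynomial.IsHomogeneous f d'}.Nonempty :=
      ⟨k, homogeneousComponent k p, hhom p hp k, hk, homogeneousComponent_isHomogeneous k p⟩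
    have hinf := Nat.sInf_mem hSne
    obtain ⟨f0, hf0mem, hf0ne, hf0hom⟩ := hinf
    have hnlt : ¬ (indeg (secantIdeal I r) < r * (d - 1) + 1) := by
      intro hlt
      apply hf0ne
      have h1 := hlow f0 hf0mem (indeg (secantIdeal I r)) (by
        have : r' + 1 = r := hr'r
        omega)
      rw [homogeneousComponent_of_mem ((mem_homogeneousSubmodule _ _).2 hf0hom)] at h1
      have heq : indeg (secantIdeal I r)
          = sInf {d' : ℕ | ∃ f ∈ secantIdeal I r, f ≠ 0 ∧ MvPolynomial.IsHomogeneous f d'} := rfl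
      rwa [if_pos heq] at h1
    push_neg at hnlt
    have : ((r * (d - 1) + 1 : ℕ) : ℤ) ≤ (indeg (secantIdeal I r) : ℤ) := by exact_mod_cast hnlt
    have hcast : ((r * (d - 1) + 1 : ℕ) : ℤ) = (r : ℤ) * d - r + 1 := by
      push_cast [Nat.cast_sub hpos]
      ring
    linarith [hcast ▸ this]
end

section
/- In characteristic 2, the join of ⟨x^3⟩ with itself in K[x] equals ⟨x^4⟩; in particular the characteristic-zero formula ⟨x^i⟩ * ⟨x^j⟩ = ⟨x^{i+j-1}⟩ fails. -/
open MvPolynomial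

/-! ### Auxiliary lemmas -/

/-- In `K[X]`, an ideal containing `X^4` but not `X^3` must be `⟨X^4⟩`. -/
lemma polyIdealEqAux (K : Type*) [Field K] (J : Ideal (Polynomial K))
    (h4 : (Polynomial.X : Polynomial K)^4 ∈ J) (h3 : (Polynomial.X : Polynomial K)^3 ∉ J) :
    J = Ideal.span {(Polynomial.X : Polynomial K)^4} := by
  obtain ⟨g, rfl⟩ := (IsPrincipalIdealRing.principal J).principal
  rw [Ideal.submodule_span_eq] at *
  have hdvd : g ∣ Polynomial.X^4 := Ideal.mem_span_singleton.mp h4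
  obtain ⟨i, hi, hassoc⟩ := (dvd_prime_pow Polynomial.prime_X 4).1 hdvd
  rcases Nat.lt_or_ge i 4 with h | h
  · exfalso
    apply h3
    rw [Ideal.mem_span_singleton]
    exact hassoc.dvd.trans (pow_dvd_pow Polynomial.X (by omega))
  · have : i = 4 := le_antisymm hi h
    subst this
    exact Ideal.span_singleton_eq_span_singleton.mpr hassoc

section Aux
variable (K : Type*) [Field K] [CharP K 2]

local notation "S" => MvPolynomial (Fin 1 ⊕ (Fin 1 ⊕ Fin 1)) K
local notation "R2" => MvPolynomial (Fin 2) K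

/-- `x^4` belongs to the join, since `x^4 = y·y^3 + z·z^3 + (y+z-x)^4` in characteristic 2. -/
lemma memX4Aux : (X 0 : MvPolynomial (Fin 1) K)^4 ∈
    joinIdeal (Ideal.span {(X 0 : MvPolynomial (Fin 1) K) ^ 3})
      (Ideal.span {(X 0 : MvPolynomial (Fin 1) K) ^ 3}) := by
  rw [joinIdeal, Ideal.mem_comap, map_pow, rename_X]
  have h2 : (2 : S) = 0 := by
    have := CharP.cast_eq_zero S 2; exact_mod_cast this
  have hy : (X (Sum.inr (Sum.inl 0)) : S)^3 ∈
      Ideal.map (rename (fun i : Fin 1 => (Sum.inr (Sum.inl i) : Fin 1 ⊕ (Fin 1 ⊕ Fin 1))))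
        (Ideal.span {(X 0 : MvPolynomial (Fin 1) K) ^ 3}) := by
    rw [show (X (Sum.inr (Sum.inl 0)) : S)^3
        = rename (fun i : Fin 1 => (Sum.inr (Sum.inl i) : Fin 1 ⊕ (Fin 1 ⊕ Fin 1)))
          ((X 0 : MvPolynomial (Fin 1) K)^3) by simp]
    exact Ideal.mem_map_of_mem _ (Ideal.subset_span rfl)
  have hz : (X (Sum.inr (Sum.inr 0)) : S)^3 ∈
      Ideal.map (rename (fun i : Fin 1 => (Sum.inr (Sum.inr i) : Fin 1 ⊕ (Fin 1 ⊕ Fin 1))))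
        (Ideal.span {(X 0 : MvPolynomial (Fin 1) K) ^ 3}) := by
    rw [show (X (Sum.inr (Sum.inr 0)) : S)^3
        = rename (fun i : Fin 1 => (Sum.inr (Sum.inr i) : Fin 1 ⊕ (Fin 1 ⊕ Fin 1)))
          ((X 0 : MvPolynomial (Fin 1) K)^3) by simp]
    exact Ideal.mem_map_of_mem _ (Ideal.subset_span rfl)
  have hg : (X (Sum.inr (Sum.inl 0)) + X (Sum.inr (Sum.inr 0)) - X (Sum.inl 0) : S) ∈
      Ideal.span {p : S | ∃ i : Fin 1,
        p = X (Sum.inr (Sum.inl i)) + X (Sum.inr (Sum.inr i)) - X (Sum.inl i)} :=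
    Ideal.subset_span ⟨0, rfl⟩
  set x : S := X (Sum.inl 0) with hxdef
  set y : S := X (Sum.inr (Sum.inl 0)) with hydef
  set z : S := X (Sum.inr (Sum.inr 0)) with hzdef
  have key : x^4 = y * y^3 + z * z^3 + (y + z - x)^3 * (y + z - x) := by
    linear_combination (-(z^4 + 2*y*z^3 + 3*y^2*z^2 + 2*y^3*z + y^4 - 2*x*z^3 - 6*x*y*z^2
      - 6*x*y^2*z - 2*x*y^3 + 3*x^2*z^2 + 6*x^2*y*z + 3*x^2*y^2 - 2*x^3*z - 2*x^3*y)) * h2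
  rw [key]
  exact Ideal.add_mem _
    (Ideal.add_mem _
      (Ideal.mem_sup_left (Ideal.mem_sup_left (Ideal.mul_mem_left _ _ hy)))
      (Ideal.mem_sup_left (Ideal.mem_sup_right (Ideal.mul_mem_left _ _ hz))))
    (Ideal.mem_sup_right (Ideal.mul_mem_left _ _ hg))

/-- The substitution map `x ↦ s + t`, `y ↦ s`, `z ↦ t` into `K[s,t]`. -/
noncomputable def phiAux : MvPolynomial (Fin 1 ⊕ (Fin 1 ⊕ Fin 1)) K →ₐ[K] MvPolynomial (Fin 2) K :=
  aeval (Sum.elim (fun _ => X 0 + X 1) (Sum.elim (fun _ => X 0) (fun _ => X 1)))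

/-- `x^3` does not belong to the join: otherwise `(s+t)^3 ∈ ⟨s^3, t^3⟩` in `K[s,t]`,
contradicting that the coefficient of `s^2 t` in `(s+t)^3` is `3 = 1 ≠ 0`. -/
lemma notMemX3Aux : (X 0 : MvPolynomial (Fin 1) K)^3 ∉
    joinIdeal (Ideal.span {(X 0 : MvPolynomial (Fin 1) K) ^ 3})
      (Ideal.span {(X 0 : MvPolynomial (Fin 1) K) ^ 3}) := by
  intro hmem
  rw [joinIdeal, Ideal.mem_comap] at hmem
  have hφ := Ideal.mem_map_of_mem (phiAux K).toRingHom hmem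
  have hle : Ideal.map (phiAux K).toRingHom
      (Ideal.map (rename (fun i : Fin 1 => (Sum.inr (Sum.inl i) : Fin 1 ⊕ (Fin 1 ⊕ Fin 1))))
          (Ideal.span {(X 0 : MvPolynomial (Fin 1) K) ^ 3}) ⊔
       Ideal.map (rename (fun i : Fin 1 => (Sum.inr (Sum.inr i) : Fin 1 ⊕ (Fin 1 ⊕ Fin 1))))
          (Ideal.span {(X 0 : MvPolynomial (Fin 1) K) ^ 3}) ⊔
       Ideal.span {p : S | ∃ i : Fin 1,
         p = X (Sum.inr (Sum.inl i)) + X (Sum.inr (Sum.inr i)) - X (Sum.inl i)})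
      ≤ Ideal.span {(X 0 : R2)^3, (X 1 : R2)^3} := by
    rw [Ideal.map_le_iff_le_comap]
    refine sup_le (sup_le ?_ ?_) ?_
    · rw [Ideal.map_le_iff_le_comap, Ideal.span_le, Set.singleton_subset_iff]
      simp only [SetLike.mem_coe, Ideal.mem_comap]
      have : (phiAux K).toRingHom
          (rename (fun i : Fin 1 => (Sum.inr (Sum.inl i) : Fin 1 ⊕ (Fin 1 ⊕ Fin 1)))
          ((X 0 : MvPolynomial (Fin 1) K)^3)) = (X 0 : R2)^3 := by
        simp [phiAux]
      rw [this]
      exact Ideal.subset_span (Set.mem_insert _ _)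
    · rw [Ideal.map_le_iff_le_comap, Ideal.span_le, Set.singleton_subset_iff]
      simp only [SetLike.mem_coe, Ideal.mem_comap]
      have : (phiAux K).toRingHom
          (rename (fun i : Fin 1 => (Sum.inr (Sum.inr i) : Fin 1 ⊕ (Fin 1 ⊕ Fin 1)))
          ((X 0 : MvPolynomial (Fin 1) K)^3)) = (X 1 : R2)^3 := by
        simp [phiAux]
      rw [this]
      exact Ideal.subset_span (Set.mem_insert_of_mem _ rfl)
    · rw [Ideal.span_le]
      rintro p ⟨i, rfl⟩
      simp only [SetLike.mem_coe, Ideal.mem_comap]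
      have : (phiAux K).toRingHom
          (X (Sum.inr (Sum.inl i)) + X (Sum.inr (Sum.inr i)) - X (Sum.inl i) : S) = 0 := by
        simp [phiAux]
      rw [this]
      exact Ideal.zero_mem _
  have hmem2 : ((X 0 : R2) + X 1)^3 ∈ Ideal.span {(X 0 : R2)^3, (X 1 : R2)^3} := by
    have : (phiAux K) (rename (Sum.inl : Fin 1 → Fin 1 ⊕ (Fin 1 ⊕ Fin 1))
        ((X 0 : MvPolynomial (Fin 1) K)^3)) = ((X 0 : R2) + X 1)^3 := by
      simp [phiAux]
    rw [← this]
    exact hle hφ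
  obtain ⟨a, b, hab⟩ := Ideal.mem_span_pair.mp hmem2
  have h2 : (2 : R2) = 0 := by
    have := CharP.cast_eq_zero R2 2; exact_mod_cast this
  have hexp : ((X 0 : R2) + X 1)^3 = X 0^3 + X 1^3 + X 0^2 * X 1 + X 0 * X 1^2 := by
    linear_combination ((X 0 : R2)^2 * X 1 + X 0 * X 1^2) * h2
  set m3 : Fin 2 →₀ ℕ := Finsupp.single 0 2 + Finsupp.single 1 1 with hm3
  have hco := congrArg (coeff m3) (hab.trans hexp)
  have cmul : ∀ (a : R2) (i : Fin 2), coeff m3 (a * X i^3) = 0 := by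
    intro a i
    rw [X_pow_eq_monomial, coeff_mul_monomial', if_neg]
    intro h
    have := h i
    fin_cases i <;> simp [hm3, Finsupp.single_apply] at this
  have c1 : coeff m3 ((X 0 : R2)^3) = 0 := by
    rw [X_pow_eq_monomial, coeff_monomial, if_neg]
    intro h
    have := DFunLike.congr_fun h 1
    simp [hm3, Finsupp.single_apply] at this
  have c2 : coeff m3 ((X 1 : R2)^3) = 0 := by
    rw [X_pow_eq_monomial, coeff_monomial, if_neg]
    intro h
    have := DFunLike.congr_fun h 0
    simp [hm3, Finsupp.single_apply] at this
  have c3 : coeff m3 ((X 0 : R2)^2 * X 1) = 1 := by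
    rw [show (X 0 : R2)^2 * X 1 = monomial m3 1 by
      rw [hm3, X_pow_eq_monomial, X, monomial_mul, mul_one], coeff_monomial, if_pos rfl]
  have c4 : coeff m3 ((X 0 : R2) * X 1^2) = 0 := by
    rw [show (X 0 : R2) * X 1^2 = monomial (Finsupp.single 0 1 + Finsupp.single 1 2) 1 by
      rw [X_pow_eq_monomial, X, monomial_mul, mul_one], coeff_monomial, if_neg]
    intro h
    have := DFunLike.congr_fun h 0
    simp [hm3, Finsupp.single_apply] at this
  rw [coeff_add, coeff_add, coeff_add, coeff_add, cmul, cmul, c1, c2, c3, c4] at hco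
  simp at hco

end Aux

/-- The algebra isomorphism `K[x] ≅ K[X]` between `MvPolynomial (Fin 1) K` and `Polynomial K`. -/
noncomputable def eOneAux (K : Type*) [Field K] : MvPolynomial (Fin 1) K ≃ₐ[K] Polynomial K :=
  (renameEquiv K ((Equiv.equivPUnit (Fin 1)) : Fin 1 ≃ PUnit.{1})).trans (pUnitAlgEquiv K)

lemma eOneAux_X (K : Type*) [Field K] : eOneAux K (X 0) = Polynomial.X := by
  simp [eOneAux, pUnitAlgEquiv]

/-- In `K[x] = MvPolynomial (Fin 1) K`, an ideal containing `x^4` but not `x^3` is `⟨x^4⟩`. -/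
lemma mvIdealEqAux (K : Type*) [Field K] (J : Ideal (MvPolynomial (Fin 1) K))
    (h4 : (X 0 : MvPolynomial (Fin 1) K)^4 ∈ J)
    (h3 : (X 0 : MvPolynomial (Fin 1) K)^3 ∉ J) :
    J = Ideal.span {(X 0 : MvPolynomial (Fin 1) K)^4} := by
  set e := (eOneAux K).toRingEquiv with he
  have heX : e (X 0) = Polynomial.X := eOneAux_X K
  have h4' : (Polynomial.X : Polynomial K)^4 ∈ Ideal.map e J := by
    have := Ideal.mem_map_of_mem e h4
    rwa [map_pow, heX] at this
  have h3' : (Polynomial.X : Polynomial K)^3 ∉ Ideal.map e J := by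
    intro h
    obtain ⟨x, hx, hex⟩ := (Ideal.mem_map_of_equiv e _).mp h
    have : x = (X 0 : MvPolynomial (Fin 1) K)^3 := by
      apply e.injective
      rw [hex, map_pow, heX]
    exact h3 (this ▸ hx)
  have hmap := polyIdealEqAux K _ h4' h3'
  have hmap2 : Ideal.map e (Ideal.span {(X 0 : MvPolynomial (Fin 1) K)^4})
      = Ideal.span {(Polynomial.X : Polynomial K)^4} := by
    rw [Ideal.map_span, Set.image_singleton, map_pow, heX]
  ext x
  rw [← Ideal.apply_mem_of_equiv_iff (f := e), ← Ideal.apply_mem_of_equiv_iff (f := e)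
    (I := Ideal.span {(X 0 : MvPolynomial (Fin 1) K)^4}), hmap, hmap2]

/-- in characteristic `2`, `⟨x^3⟩ * ⟨x^3⟩ = ⟨x^4⟩`; in particular the
characteristic-zero formula `⟨x^i⟩ * ⟨x^j⟩ = ⟨x^{i+j-1}⟩` (which would give `⟨x^5⟩`) fails. -/
theorem stmt_16 (K : Type*) [Field K] [CharP K 2] :
    joinIdeal (Ideal.span {(X 0 : MvPolynomial (Fin 1) K) ^ 3})
        (Ideal.span {(X 0 : MvPolynomial (Fin 1) K) ^ 3})
      = Ideal.span {(X 0 : MvPolynomial (Fin 1) K) ^ 4} ∧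
    joinIdeal (Ideal.span {(X 0 : MvPolynomial (Fin 1) K) ^ 3})
        (Ideal.span {(X 0 : MvPolynomial (Fin 1) K) ^ 3})
      ≠ Ideal.span {(X 0 : MvPolynomial (Fin 1) K) ^ (3 + 3 - 1)} := by
  have heq := mvIdealEqAux K _ (memX4Aux K) (notMemX3Aux K)
  refine ⟨heq, ?_⟩
  rw [heq]
  norm_num
  intro h
  have h4 : (X 0 : MvPolynomial (Fin 1) K)^4 ∈
      Ideal.span {(X 0 : MvPolynomial (Fin 1) K) ^ 5} := by
    rw [← h]; exact Ideal.subset_span rfl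
  have hdvd : (X 0 : MvPolynomial (Fin 1) K)^5 ∣ (X 0 : MvPolynomial (Fin 1) K)^4 :=
    Ideal.mem_span_singleton.mp h4
  have hdvd' : (Polynomial.X : Polynomial K)^5 ∣ (Polynomial.X : Polynomial K)^4 := by
    have := map_dvd (eOneAux K) hdvd
    rwa [map_pow, map_pow, eOneAux_X] at this
  have := Polynomial.natDegree_le_of_dvd hdvd' (pow_ne_zero _ Polynomial.X_ne_zero)
  simp [Polynomial.natDegree_X_pow] at this
end
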